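/- arXiv:2206.06345 — 9 statements merged into one kernel-verified Lean document; each statement's English description precedes it below -/
import Mathlib

section
/- (Theorem 3.1.) Let L be a nonempty set with a partial order ≼ and a multiplicative G_M-metric G such that (L, G) is multiplicative G_M-complete. Let F : L → L, x₀ ∈ L, η ∈ [0,1), γ > 0, and let m be a positive integer. Assume: (i) F x ≼ x for every x ∈ L; (ii) G(Fx, Fy, Fz)^{1/m} ≤ (G(x,y,z)^{1/m})^η for all x, y, z in the closed ball B̄(x₀, γ); (iii) G(x₀, Fx₀, Fx₀) ≤ γ^{1−η}; (iv) whenever a nonincreasing sequence (x_n) multiplicative G_M-converges to a point s, then s ≼ x_n for every n. Then there exists x* ∈ B̄(x₀, γ) with F x* = x* and G(x*, x*, x*) = 1. Moreover, if every two points of B̄(x₀, γ) have a lower bound belonging to B̄(x₀, γ), then x* is the unique fixed point of F in B̄(x₀, γ). -/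
structure IsMultGMetric {Z : Type*} (G : Z → Z → Z → ℝ) : Prop where
  pos : ∀ x y z, 0 < G x y z
  eq_one : ∀ x y z, x = y → y = z → G x y z = 1
  one_lt : ∀ x y, x ≠ y → 1 < G x x y
  le_of_ne : ∀ x y z, y ≠ z → G x x y ≤ G x y z
  perm : ∀ x y z, G x y z = G y z x
  swap : ∀ x y z, G x y z = G x z y
  rect : ∀ x y z t, G x y z ≤ G x t t * G t y z

def GMConv {Z : Type*} (G : Z → Z → Z → ℝ) (x : ℕ → Z) (p : Z) : Prop :=
  ∀ ε : ℝ, 1 < ε → ∃ N : ℕ, ∀ n ≥ N, ∀ m ≥ N, G (x n) (x m) p < ε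

def GMCauchy {Z : Type*} (G : Z → Z → Z → ℝ) (x : ℕ → Z) : Prop :=
  ∀ ε : ℝ, 1 < ε → ∃ N : ℕ, ∀ n ≥ N, ∀ m ≥ N, ∀ l ≥ N, G (x n) (x m) (x l) < ε

def GMComplete {Z : Type*} (G : Z → Z → Z → ℝ) : Prop :=
  ∀ x : ℕ → Z, GMCauchy G x → ∃ p : Z, GMConv G x p

def GMBall {Z : Type*} (G : Z → Z → Z → ℝ) (x₀ : Z) (γ : ℝ) : Set Z :=
  {ρ | G x₀ ρ ρ ≤ γ}

theorem theorem_3_1 {L : Type*} [Nonempty L] [PartialOrder L]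
    (G : L → L → L → ℝ) (hG : IsMultGMetric G) (hcomp : GMComplete G)
    (F : L → L) (x₀ : L) (η γ : ℝ) (m : ℕ)
    (hη0 : 0 ≤ η) (hη1 : η < 1) (hγ : 0 < γ) (hm : 0 < m)
    (hdec : ∀ x : L, F x ≤ x)
    (hcontr : ∀ x ∈ GMBall G x₀ γ, ∀ y ∈ GMBall G x₀ γ, ∀ z ∈ GMBall G x₀ γ,
      (G (F x) (F y) (F z)) ^ (1 / (m : ℝ)) ≤ ((G x y z) ^ (1 / (m : ℝ))) ^ η)
    (hstart : G x₀ (F x₀) (F x₀) ≤ γ ^ (1 - η))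
    (hmono : ∀ (x : ℕ → L) (s : L), (∀ n, x (n + 1) ≤ x n) → GMConv G x s →
      ∀ n, s ≤ x n) :
    ∃ xs ∈ GMBall G x₀ γ, F xs = xs ∧ G xs xs xs = 1 ∧
      ((∀ u ∈ GMBall G x₀ γ, ∀ v ∈ GMBall G x₀ γ,
          ∃ t ∈ GMBall G x₀ γ, t ≤ u ∧ t ≤ v) →
        ∀ y ∈ GMBall G x₀ γ, F y = y → y = xs) := by
  -- G is always ≥ 1
  have one_le : ∀ a b c : L, 1 ≤ G a b c := by
    intro a b c
    by_cases hbc : b = c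
    · subst hbc
      by_cases hab : a = b
      · exact le_of_eq (hG.eq_one a b b hab rfl).symm
      · have h1 : G a b b = G b b a := hG.perm a b b
        have h2 := hG.one_lt b a (fun h => hab h.symm)
        rw [h1]; exact h2.le
    · by_cases hab : a = b
      · subst hab
        exact (hG.one_lt a c hbc).le
      · exact le_trans (hG.one_lt a b hab).le (hG.le_of_ne a b c hbc)
  -- symmetry-type inequality: G a b b ≤ G b a a * G b a a
  have sym2 : ∀ a b : L, G a b b ≤ G b a a * G b a a := by
    intro a b
    have h1 : G a b b = G b b a := hG.perm a b b
    have h2 := hG.rect b b a a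
    have h3 : G a b a = G b a a := hG.perm a b a
    rw [h3] at h2
    rw [h1]; exact h2
  -- γ ≥ 1
  have hγ1 : (1 : ℝ) ≤ γ := by
    by_contra h
    push_neg at h
    have := Real.rpow_lt_one hγ.le h (by linarith : (0:ℝ) < 1 - η)
    exact absurd (le_trans (one_le _ _ _) hstart) (by linarith)
  -- reformulated contraction
  have contr' : ∀ a ∈ GMBall G x₀ γ, ∀ b ∈ GMBall G x₀ γ, ∀ c ∈ GMBall G x₀ γ,
      G (F a) (F b) (F c) ≤ (G a b c) ^ η := by
    intro a ha b hb c hc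
    have h := hcontr a ha b hb c hc
    have hA : (0:ℝ) < G (F a) (F b) (F c) := hG.pos _ _ _
    have hB : (0:ℝ) < G a b c := hG.pos _ _ _
    have hrw : ((G a b c) ^ (1 / (m : ℝ))) ^ η = ((G a b c) ^ η) ^ (1 / (m : ℝ)) := by
      rw [← Real.rpow_mul hB.le, ← Real.rpow_mul hB.le, mul_comm]
    rw [hrw] at h
    have hm0 : (m : ℝ) ≠ 0 := Nat.cast_ne_zero.mpr hm.ne'
    have h2 := Real.rpow_le_rpow (by positivity) h (by positivity : (0:ℝ) ≤ (m:ℝ))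
    rw [← Real.rpow_mul hA.le, ← Real.rpow_mul (by positivity)] at h2
    rw [one_div, inv_mul_cancel₀ hm0, Real.rpow_one, Real.rpow_one] at h2
    exact h2
  set x : ℕ → L := fun n => F^[n] x₀ with hxdef
  have hx0 : x 0 = x₀ := rfl
  have hxs : ∀ n, x (n + 1) = F (x n) := fun n => Function.iterate_succ_apply' F n x₀
  have hpowle : ∀ n : ℕ, η ^ n ≤ 1 := fun n => pow_le_one₀ hη0 hη1.le
  have hpow0 : ∀ n : ℕ, (0:ℝ) ≤ η ^ n := fun n => pow_nonneg hη0 n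
  -- main induction
  have main : ∀ n, G x₀ (x n) (x n) ≤ γ ^ (1 - η ^ n)
      ∧ G (x n) (x (n+1)) (x (n+1)) ≤ γ ^ ((1 - η) * η ^ n) := by
    intro n
    induction n with
    | zero =>
      constructor
      · rw [hx0, hG.eq_one x₀ x₀ x₀ rfl rfl]
        simp [Real.rpow_zero]
      · rw [hx0, hxs 0, hx0]
        simpa using hstart
    | succ n ih =>
      obtain ⟨hb, hd⟩ := ih
      have hbn1 : G x₀ (x (n+1)) (x (n+1)) ≤ γ ^ (1 - η ^ (n+1)) := by
        calc G x₀ (x (n+1)) (x (n+1))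
            ≤ G x₀ (x n) (x n) * G (x n) (x (n+1)) (x (n+1)) := hG.rect _ _ _ _
          _ ≤ γ ^ (1 - η ^ n) * γ ^ ((1 - η) * η ^ n) := by
              apply mul_le_mul hb hd (hG.pos _ _ _).le (Real.rpow_nonneg hγ.le _)
          _ = γ ^ (1 - η ^ (n+1)) := by
              rw [← Real.rpow_add hγ]; ring_nf
      have hballn : x n ∈ GMBall G x₀ γ := by
        refine le_trans hb ?_
        calc γ ^ (1 - η ^ n) ≤ γ ^ (1:ℝ) :=
              Real.rpow_le_rpow_of_exponent_le hγ1 (by linarith [hpow0 n])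
          _ = γ := Real.rpow_one γ
      have hballn1 : x (n+1) ∈ GMBall G x₀ γ := by
        refine le_trans hbn1 ?_
        calc γ ^ (1 - η ^ (n+1)) ≤ γ ^ (1:ℝ) :=
              Real.rpow_le_rpow_of_exponent_le hγ1 (by linarith [hpow0 (n+1)])
          _ = γ := Real.rpow_one γ
      refine ⟨hbn1, ?_⟩
      have step := contr' _ hballn _ hballn1 _ hballn1
      rw [← hxs (n+1), ← hxs n] at step
      calc G (x (n+1)) (x (n+2)) (x (n+2))
          ≤ (G (x n) (x (n+1)) (x (n+1))) ^ η := step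
        _ ≤ (γ ^ ((1 - η) * η ^ n)) ^ η :=
            Real.rpow_le_rpow (hG.pos _ _ _).le hd hη0
        _ = γ ^ ((1 - η) * η ^ (n+1)) := by
            rw [← Real.rpow_mul hγ.le]; ring_nf
  have hball : ∀ n, x n ∈ GMBall G x₀ γ := by
    intro n
    refine le_trans (main n).1 ?_
    calc γ ^ (1 - η ^ n) ≤ γ ^ (1:ℝ) :=
          Real.rpow_le_rpow_of_exponent_le hγ1 (by linarith [hpow0 n])
      _ = γ := Real.rpow_one γ
  -- chain inequality
  have chain : ∀ k j, k ≤ j → G (x k) (x j) (x j) ≤ γ ^ ((η ^ k - η ^ j : ℝ)) := by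
    intro k j hkj
    induction j, hkj using Nat.le_induction with
    | base =>
      rw [hG.eq_one _ _ _ rfl rfl, sub_self, Real.rpow_zero]
    | succ j hkj ih =>
      calc G (x k) (x (j+1)) (x (j+1))
          ≤ G (x k) (x j) (x j) * G (x j) (x (j+1)) (x (j+1)) := hG.rect _ _ _ _
        _ ≤ γ ^ ((η ^ k - η ^ j : ℝ)) * γ ^ ((1 - η) * η ^ j) :=
            mul_le_mul ih (main j).2 (hG.pos _ _ _).le (Real.rpow_nonneg hγ.le _)
        _ = γ ^ ((η ^ k - η ^ (j+1) : ℝ)) := by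
            rw [← Real.rpow_add hγ]; ring_nf
  have tail : ∀ k j, k ≤ j → G (x k) (x j) (x j) ≤ γ ^ ((η ^ k : ℝ)) := by
    intro k j hkj
    refine le_trans (chain k j hkj) ?_
    exact Real.rpow_le_rpow_of_exponent_le hγ1 (by linarith [hpow0 j])
  -- reversed-order tail bound
  have tail2 : ∀ N n, N ≤ n → G (x n) (x N) (x N) ≤ γ ^ ((2 * η ^ N : ℝ)) := by
    intro N n hNn
    calc G (x n) (x N) (x N) ≤ G (x N) (x n) (x n) * G (x N) (x n) (x n) := sym2 _ _
      _ ≤ γ ^ ((η ^ N : ℝ)) * γ ^ ((η ^ N : ℝ)) := by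
          apply mul_le_mul (tail N n hNn) (tail N n hNn) (hG.pos _ _ _).le
            (Real.rpow_nonneg hγ.le _)
      _ = γ ^ ((2 * η ^ N : ℝ)) := by rw [← Real.rpow_add hγ]; ring_nf
  -- Cauchy
  have hcauchy : GMCauchy G x := by
    intro ε hε
    have h1 : Filter.Tendsto (fun N : ℕ => (6:ℝ) * η ^ N * Real.log γ)
        Filter.atTop (nhds 0) := by
      have := (tendsto_pow_atTop_nhds_zero_of_lt_one hη0 hη1).const_mul (6:ℝ)
      simpa using this.mul_const (Real.log γ)
    have h2 : Filter.Tendsto (fun N : ℕ => γ ^ ((6 * η ^ N : ℝ)))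
        Filter.atTop (nhds 1) := by
      have h3 := Real.tendsto_exp_nhds_zero_nhds_one.comp h1
      refine h3.congr fun N => ?_
      simp only [Function.comp_apply]
      rw [Real.rpow_def_of_pos hγ]
      ring_nf
    obtain ⟨N, hN⟩ := (h2.eventually_lt_const hε).exists
    refine ⟨N, fun n hn mm hmm l hl => ?_⟩
    have key : G (x n) (x mm) (x l)
        ≤ γ ^ ((2 * η ^ N : ℝ)) * (γ ^ ((2 * η ^ N : ℝ)) * γ ^ ((2 * η ^ N : ℝ))) := by
      have s1 : G (x n) (x mm) (x l) ≤ G (x n) (x N) (x N) * G (x N) (x mm) (x l) :=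
        hG.rect _ _ _ _
      have s2 : G (x N) (x mm) (x l) = G (x mm) (x l) (x N) := hG.perm _ _ _
      have s3 : G (x mm) (x l) (x N) ≤ G (x mm) (x N) (x N) * G (x N) (x l) (x N) :=
        hG.rect _ _ _ _
      have s4 : G (x N) (x l) (x N) = G (x l) (x N) (x N) := hG.perm _ _ _
      calc G (x n) (x mm) (x l) ≤ G (x n) (x N) (x N) * G (x N) (x mm) (x l) := s1
        _ ≤ G (x n) (x N) (x N) * (G (x mm) (x N) (x N) * G (x l) (x N) (x N)) := by
            rw [s2]
            refine mul_le_mul_of_nonneg_left ?_ (hG.pos _ _ _).le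
            rw [← s4]; exact s3
        _ ≤ γ ^ ((2 * η ^ N : ℝ)) * (γ ^ ((2 * η ^ N : ℝ)) * γ ^ ((2 * η ^ N : ℝ))) := by
            apply mul_le_mul (tail2 N n hn) ?_
              (mul_pos (hG.pos _ _ _) (hG.pos _ _ _)).le (Real.rpow_nonneg hγ.le _)
            apply mul_le_mul (tail2 N mm hmm) (tail2 N l hl) (hG.pos _ _ _).le
              (Real.rpow_nonneg hγ.le _)
    refine lt_of_le_of_lt key ?_
    have : γ ^ ((2 * η ^ N : ℝ)) * (γ ^ ((2 * η ^ N : ℝ)) * γ ^ ((2 * η ^ N : ℝ)))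
        = γ ^ ((6 * η ^ N : ℝ)) := by
      rw [← Real.rpow_add hγ, ← Real.rpow_add hγ]; ring_nf
    rw [this]; exact hN
  obtain ⟨p, hp⟩ := hcomp x hcauchy
  -- p is in the ball
  have pball : p ∈ GMBall G x₀ γ := by
    show G x₀ p p ≤ γ
    refine le_of_forall_gt_imp_ge_of_dense fun a ha => ?_
    have haγ : 1 < a / γ := (one_lt_div hγ).mpr ha
    set δ := Real.sqrt (a / γ) with hδdef
    have hδ1 : 1 < δ := by
      rw [hδdef, show (1:ℝ) = Real.sqrt 1 by simp]
      exact Real.sqrt_lt_sqrt (by norm_num) haγ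
    have hδsq : δ * δ = a / γ := Real.mul_self_sqrt (by positivity)
    obtain ⟨N, hN⟩ := hp δ hδ1
    have hNN : G (x N) (x N) p < δ := hN N le_rfl N le_rfl
    have h1 : G x₀ p p ≤ G x₀ (x N) (x N) * G (x N) p p := hG.rect _ _ _ _
    have h2 : G (x N) p p ≤ G p (x N) (x N) * G p (x N) (x N) := sym2 _ _
    have h3 : G p (x N) (x N) = G (x N) (x N) p := hG.perm _ _ _
    have h4 : G (x N) p p ≤ δ * δ := by
      refine le_trans h2 ?_
      rw [h3]
      have := (hG.pos (x N) (x N) p)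
      nlinarith
    calc G x₀ p p ≤ G x₀ (x N) (x N) * G (x N) p p := h1
      _ ≤ γ * (δ * δ) := by
          apply mul_le_mul (hball N) h4 (hG.pos _ _ _).le hγ.le
      _ = a := by rw [hδsq]; field_simp
  -- fixed point
  have hfix : F p = p := by
    have key : G p (F p) (F p) ≤ 1 := by
      refine le_of_forall_gt_imp_ge_of_dense fun ε hε => ?_
      set s := Real.sqrt ε with hsdef
      have hs1 : 1 < s := by
        rw [hsdef, show (1:ℝ) = Real.sqrt 1 by simp]
        exact Real.sqrt_lt_sqrt (by norm_num) hε
      have hssq : s * s = ε := Real.mul_self_sqrt (by positivity)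
      set δ := Real.sqrt s with hδdef
      have hδ1 : 1 < δ := by
        rw [hδdef, show (1:ℝ) = Real.sqrt 1 by simp]
        exact Real.sqrt_lt_sqrt (by norm_num) hs1
      have hδsq : δ * δ = s := Real.mul_self_sqrt (by positivity)
      obtain ⟨N, hN⟩ := hp δ hδ1
      have a0 : G (x N) (x N) p < δ := hN N le_rfl N le_rfl
      have a1 : G (x (N+1)) (x (N+1)) p < δ := hN (N+1) (Nat.le_succ N) (N+1) (Nat.le_succ N)
      have c1 : G p (x (N+1)) (x (N+1)) = G (x (N+1)) (x (N+1)) p := hG.perm _ _ _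
      have c2 : G (x N) p p ≤ s := by
        refine le_trans (sym2 _ _) ?_
        have h3 : G p (x N) (x N) = G (x N) (x N) p := hG.perm _ _ _
        rw [h3, ← hδsq]
        have := hG.pos (x N) (x N) p
        nlinarith
      have c3 : G (x (N+1)) (F p) (F p) ≤ s := by
        rw [hxs N]
        calc G (F (x N)) (F p) (F p) ≤ (G (x N) p p) ^ η :=
              contr' _ (hball N) _ pball _ pball
          _ ≤ s ^ η := Real.rpow_le_rpow (hG.pos _ _ _).le c2 hη0
          _ ≤ s ^ (1:ℝ) := Real.rpow_le_rpow_of_exponent_le hs1.le hη1.le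
          _ = s := Real.rpow_one s
      calc G p (F p) (F p)
          ≤ G p (x (N+1)) (x (N+1)) * G (x (N+1)) (F p) (F p) := hG.rect _ _ _ _
        _ ≤ δ * s := by
            have a1' : G p (x (N+1)) (x (N+1)) ≤ δ := by rw [c1]; exact a1.le
            exact mul_le_mul a1' c3 (hG.pos _ _ _).le (by linarith)
        _ ≤ s * s := by nlinarith [hδsq]
        _ = ε := hssq
    have key2 : G p (F p) (F p) = 1 := le_antisymm key (one_le _ _ _)
    by_contra hne
    have h2 := hG.one_lt (F p) p hne
    rw [hG.perm p (F p) (F p)] at key2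
    linarith
  refine ⟨p, pball, hfix, hG.eq_one p p p rfl rfl, ?_⟩
  intro _ y hy hFy
  have h := contr' p pball y hy y hy
  rw [hfix, hFy] at h
  have hA1 : 1 ≤ G p y y := one_le _ _ _
  have hAeq : G p y y = 1 := by
    rcases eq_or_lt_of_le hA1 with heq | hlt
    · exact heq.symm
    · exfalso
      have := Real.rpow_lt_rpow_of_exponent_lt hlt hη1
      rw [Real.rpow_one] at this
      linarith
  by_contra hne
  have h1 : G p y y = G y y p := hG.perm _ _ _
  have h2 := hG.one_lt y p hne
  rw [h1] at hAeq
  linarith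
end

section
/- (Corollary 3.2.) Let L be a nonempty set with a partial order ≼ and a multiplicative G_M-metric G such that (L, G) is multiplicative G_M-complete. Let F : L → L, x₀ ∈ L, η ∈ [0,1) and γ > 0. Assume: (i) F x ≼ x for every x ∈ L; (ii) G(Fx, Fy, Fz) ≤ G(x,y,z)^η for all x, y, z in the closed ball B̄(x₀, γ); (iii) G(x₀, Fx₀, Fx₀) ≤ γ^{1−η}; (iv) whenever a nonincreasing sequence (x_n) multiplicative G_M-converges to a point s, then s ≼ x_n for every n. Then there exists x* ∈ B̄(x₀, γ) with F x* = x* and G(x*, x*, x*) = 1. Moreover, if every two points of B̄(x₀, γ) have a lower bound belonging to B̄(x₀, γ), then x* is the unique fixed point of F in B̄(x₀, γ). -/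
theorem corollary_3_2 {L : Type*} [Nonempty L] [PartialOrder L]
    (G : L → L → L → ℝ) (hG : IsMultGMetric G) (hcomp : GMComplete G)
    (F : L → L) (x₀ : L) (η γ : ℝ)
    (hη0 : 0 ≤ η) (hη1 : η < 1) (hγ : 0 < γ)
    (hdec : ∀ x : L, F x ≤ x)
    (hcontr : ∀ x ∈ GMBall G x₀ γ, ∀ y ∈ GMBall G x₀ γ, ∀ z ∈ GMBall G x₀ γ,
      G (F x) (F y) (F z) ≤ (G x y z) ^ η)
    (hstart : G x₀ (F x₀) (F x₀) ≤ γ ^ (1 - η))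
    (hmono : ∀ (x : ℕ → L) (s : L), (∀ n, x (n + 1) ≤ x n) → GMConv G x s →
      ∀ n, s ≤ x n) :
    ∃ xs ∈ GMBall G x₀ γ, F xs = xs ∧ G xs xs xs = 1 ∧
      ((∀ u ∈ GMBall G x₀ γ, ∀ v ∈ GMBall G x₀ γ,
          ∃ t ∈ GMBall G x₀ γ, t ≤ u ∧ t ≤ v) →
        ∀ y ∈ GMBall G x₀ γ, F y = y → y = xs) := by
  -- basic helper facts
  have one_le : ∀ a b c, 1 ≤ G a b c := by
    intro a b c
    by_cases hbc : b = c
    · subst hbc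
      by_cases hab : a = b
      · subst hab
        exact le_of_eq (hG.eq_one a a a rfl rfl).symm
      · have h1 := hG.one_lt b a (fun h => hab h.symm)
        have h2 : G a b b = G b b a := hG.perm a b b
        linarith
    · have h1 : G a a b ≤ G a b c := hG.le_of_ne a b c hbc
      by_cases hab : a = b
      · subst hab
        rw [hG.eq_one a a a rfl rfl] at h1; exact h1
      · have := hG.one_lt a b hab; linarith
  have symm2 : ∀ a b, G a b b ≤ (G a a b) ^ 2 := by
    intro a b
    have h1 : G a b b = G b b a := hG.perm a b b
    have h2 : G b b a ≤ G b a a * G a b a := hG.rect b b a a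
    have h3 : G b a a = G a a b := by rw [hG.perm b a a]
    have h4 : G a b a = G a a b := hG.swap a b a
    rw [h1]; rw [h3, h4] at h2
    calc G b b a ≤ G a a b * G a a b := h2
    _ = (G a a b) ^ 2 := by ring
  have hγ1 : (1:ℝ) ≤ γ := by
    by_contra h
    push_neg at h
    have h1 : γ ^ (1 - η) < 1 := Real.rpow_lt_one hγ.le h (by linarith)
    have h2 : (1:ℝ) ≤ G x₀ (F x₀) (F x₀) := one_le _ _ _
    linarith
  -- the Picard sequence
  set x : ℕ → L := fun n => F^[n] x₀ with hx
  have hx0 : x 0 = x₀ := rfl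
  have hxs : ∀ n, x (n + 1) = F (x n) := by
    intro n; simp [hx, Function.iterate_succ_apply']
  have hηn : ∀ n : ℕ, 0 ≤ η ^ n := fun n => pow_nonneg hη0 n
  have hηn1 : ∀ n : ℕ, η ^ n ≤ 1 := fun n => pow_le_one₀ hη0 hη1.le
  have hrpow_le : ∀ a b : ℝ, a ≤ b → γ ^ a ≤ γ ^ b :=
    fun a b hab => Real.rpow_le_rpow_of_exponent_le hγ1 hab
  -- key induction: ball membership and step bounds
  have key : ∀ n, G x₀ (x n) (x n) ≤ γ ^ (1 - η ^ n) ∧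
      G (x n) (x (n + 1)) (x (n + 1)) ≤ γ ^ ((1 - η) * η ^ n) := by
    intro n
    induction n with
    | zero =>
      constructor
      · rw [hx0, hG.eq_one x₀ x₀ x₀ rfl rfl]; simp
      · rw [hx0, hxs 0, hx0]; simpa using hstart
    | succ n ih =>
      have hballn : G x₀ (x n) (x n) ≤ γ := by
        refine le_trans ih.1 ?_
        calc γ ^ (1 - η ^ n) ≤ γ ^ (1:ℝ) := hrpow_le _ _ (by have := hηn n; linarith)
        _ = γ := Real.rpow_one γ
      have hb1 : G x₀ (x (n+1)) (x (n+1)) ≤ γ ^ (1 - η ^ (n+1)) := by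
        have hr := hG.rect x₀ (x (n+1)) (x (n+1)) (x n)
        have hmul : G x₀ (x n) (x n) * G (x n) (x (n+1)) (x (n+1)) ≤
            γ ^ (1 - η ^ n) * γ ^ ((1 - η) * η ^ n) :=
          mul_le_mul ih.1 ih.2 (hG.pos _ _ _).le (by positivity)
        have heq : γ ^ ((1 : ℝ) - η ^ n) * γ ^ ((1 - η) * η ^ n) = γ ^ (1 - η ^ (n+1)) := by
          rw [← Real.rpow_add hγ]; congr 1; ring
        rw [heq] at hmul
        exact le_trans hr hmul
      have hballn1 : G x₀ (x (n+1)) (x (n+1)) ≤ γ := by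
        refine le_trans hb1 ?_
        calc γ ^ (1 - η ^ (n+1)) ≤ γ ^ (1:ℝ) := hrpow_le _ _ (by have := hηn (n+1); linarith)
        _ = γ := Real.rpow_one γ
      refine ⟨hb1, ?_⟩
      have hc := hcontr (x n) hballn (x (n+1)) hballn1 (x (n+1)) hballn1
      rw [← hxs n, ← hxs (n+1)] at hc
      calc G (x (n+1)) (x (n+1+1)) (x (n+1+1))
          ≤ (G (x n) (x (n+1)) (x (n+1))) ^ η := hc
        _ ≤ (γ ^ ((1 - η) * η ^ n)) ^ η :=
            Real.rpow_le_rpow (hG.pos _ _ _).le ih.2 hη0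
        _ = γ ^ ((1 - η) * η ^ (n+1)) := by
            rw [← Real.rpow_mul hγ.le]; congr 1; ring
  have ball : ∀ n, G x₀ (x n) (x n) ≤ γ := by
    intro n
    refine le_trans (key n).1 ?_
    calc γ ^ (1 - η ^ n) ≤ γ ^ (1:ℝ) := hrpow_le _ _ (by have := hηn n; linarith)
    _ = γ := Real.rpow_one γ
  -- chain bound
  have chain : ∀ k n, G (x n) (x (n + k)) (x (n + k)) ≤ γ ^ (η ^ n - η ^ (n + k)) := by
    intro k
    induction k with
    | zero =>
      intro n
      rw [hG.eq_one (x n) (x (n+0)) (x (n+0)) rfl rfl]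
      simp
    | succ k ih =>
      intro n
      have hr := hG.rect (x n) (x (n + (k+1))) (x (n + (k+1))) (x (n+1))
      have h2 := ih (n+1)
      have hre : n + 1 + k = n + (k + 1) := by omega
      rw [hre] at h2
      have hmul : G (x n) (x (n+1)) (x (n+1)) * G (x (n+1)) (x (n+(k+1))) (x (n+(k+1))) ≤
          γ ^ ((1 - η) * η ^ n) * γ ^ (η ^ (n+1) - η ^ (n + (k+1))) :=
        mul_le_mul (key n).2 h2 (hG.pos _ _ _).le (by positivity)
      have heq : γ ^ ((1 - η) * η ^ n) * γ ^ (η ^ (n+1) - η ^ (n + (k+1))) =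
          γ ^ (η ^ n - η ^ (n + (k+1))) := by
        rw [← Real.rpow_add hγ]; congr 1; ring
      rw [heq] at hmul
      exact le_trans hr hmul
  -- two-point bounds from level N
  have later : ∀ N m, N ≤ m → G (x N) (x m) (x m) ≤ γ ^ (η ^ N) := by
    intro N m hNm
    obtain ⟨k, rfl⟩ := Nat.exists_eq_add_of_le hNm
    refine le_trans (chain k N) (hrpow_le _ _ ?_)
    have := hηn (N + k); linarith
  have earlier : ∀ N m, N ≤ m → G (x m) (x N) (x N) ≤ γ ^ (2 * η ^ N) := by
    intro N m hNm
    have h1 : G (x m) (x N) (x N) ≤ (G (x m) (x m) (x N)) ^ 2 := symm2 _ _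
    have h2 : G (x m) (x m) (x N) = G (x N) (x m) (x m) := by
      rw [hG.perm (x N) (x m) (x m)]
    have h3 : G (x m) (x m) (x N) ≤ γ ^ (η ^ N) := by rw [h2]; exact later N m hNm
    have h4 : (G (x m) (x m) (x N)) ^ 2 ≤ (γ ^ (η ^ N)) ^ 2 :=
      pow_le_pow_left₀ (hG.pos _ _ _).le h3 2
    have h5 : (γ ^ (η ^ N)) ^ 2 = γ ^ (2 * η ^ N) := by
      rw [← Real.rpow_natCast (γ ^ (η ^ N)) 2, ← Real.rpow_mul hγ.le]
      norm_num [mul_comm]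
    rw [h5] at h4
    exact le_trans h1 h4
  -- triple bound
  have triple : ∀ N n m l, N ≤ n → N ≤ m → N ≤ l →
      G (x n) (x m) (x l) ≤ γ ^ (6 * η ^ N) := by
    intro N n m l hn hm hl
    have h1 := hG.rect (x n) (x m) (x l) (x N)
    have h2 : G (x N) (x m) (x l) = G (x m) (x l) (x N) := hG.perm _ _ _
    have h3 := hG.rect (x m) (x l) (x N) (x N)
    have h4 : G (x N) (x l) (x N) = G (x l) (x N) (x N) := hG.perm _ _ _
    have e1 : G (x n) (x N) (x N) ≤ γ ^ (2 * η ^ N) := earlier N n hn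
    have e2 : G (x m) (x N) (x N) ≤ γ ^ (2 * η ^ N) := earlier N m hm
    have e3 : G (x l) (x N) (x N) ≤ γ ^ (2 * η ^ N) := earlier N l hl
    have hp1 := (hG.pos (x n) (x N) (x N)).le
    have hp2 := (hG.pos (x m) (x N) (x N)).le
    have hp3 := (hG.pos (x l) (x N) (x N)).le
    have hq : (0:ℝ) ≤ γ ^ (2 * η ^ N) := by positivity
    have hmul : G (x n) (x N) (x N) * (G (x m) (x N) (x N) * G (x l) (x N) (x N)) ≤
        γ ^ (2 * η ^ N) * (γ ^ (2 * η ^ N) * γ ^ (2 * η ^ N)) := by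
      apply mul_le_mul e1 (mul_le_mul e2 e3 hp3 hq) (by positivity) hq
    have heq : γ ^ (2 * η ^ N) * (γ ^ (2 * η ^ N) * γ ^ (2 * η ^ N)) = γ ^ (6 * η ^ N) := by
      rw [← Real.rpow_add hγ, ← Real.rpow_add hγ]; congr 1; ring
    calc G (x n) (x m) (x l)
        ≤ G (x n) (x N) (x N) * G (x N) (x m) (x l) := h1
      _ = G (x n) (x N) (x N) * G (x m) (x l) (x N) := by rw [h2]
      _ ≤ G (x n) (x N) (x N) * (G (x m) (x N) (x N) * G (x N) (x l) (x N)) := by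
          apply mul_le_mul_of_nonneg_left h3 hp1
      _ = G (x n) (x N) (x N) * (G (x m) (x N) (x N) * G (x l) (x N) (x N)) := by rw [h4]
      _ ≤ γ ^ (2 * η ^ N) * (γ ^ (2 * η ^ N) * γ ^ (2 * η ^ N)) := hmul
      _ = γ ^ (6 * η ^ N) := heq
  -- tendsto argument: for any ε > 1 we can find N with γ ^ (6 * η ^ N) < ε
  have findN : ∀ ε : ℝ, 1 < ε → ∃ N : ℕ, γ ^ (6 * η ^ N) < ε := by
    intro ε hε
    have h0 : Filter.Tendsto (fun N : ℕ => (6:ℝ) * η ^ N) Filter.atTop (nhds 0) := by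
      have := (tendsto_pow_atTop_nhds_zero_of_lt_one hη0 hη1).const_mul (6:ℝ)
      simpa using this
    have hc : ContinuousAt (fun t : ℝ => γ ^ t) 0 :=
      Real.continuousAt_const_rpow (ne_of_gt hγ)
    have h1 : Filter.Tendsto (fun N : ℕ => γ ^ (6 * η ^ N)) Filter.atTop (nhds (γ ^ (0:ℝ))) :=
      (hc.tendsto).comp h0
    rw [Real.rpow_zero] at h1
    exact (h1.eventually_lt_const hε).exists
  -- Cauchy
  have hcauchy : GMCauchy G x := by
    intro ε hε
    obtain ⟨N, hN⟩ := findN ε hε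
    exact ⟨N, fun n hn m hm l hl => lt_of_le_of_lt (triple N n m l hn hm hl) hN⟩
  obtain ⟨p, hp⟩ := hcomp x hcauchy
  -- p is in the ball
  have pball : G x₀ p p ≤ γ := by
    by_contra hnot
    push_neg at hnot
    set a := G x₀ p p with ha
    have ha1 : (1:ℝ) ≤ a := one_le _ _ _
    have haγ : 1 < a / γ := (one_lt_div hγ).mpr hnot
    set ε := Real.sqrt ((a / γ + 1) / 2) with hεdef
    have hεsq : ε ^ 2 = (a / γ + 1) / 2 := Real.sq_sqrt (by linarith)
    have hε : 1 < ε := by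
      nlinarith [Real.sqrt_nonneg ((a / γ + 1) / 2), hεsq]
    obtain ⟨N, hN⟩ := hp ε hε
    have h1 : G (x N) (x N) p < ε := hN N le_rfl N le_rfl
    have h2 : G (x N) p p ≤ (G (x N) (x N) p) ^ 2 := symm2 _ _
    have h3 : G (x N) p p < ε ^ 2 := by
      have := hG.pos (x N) (x N) p
      nlinarith
    have h4 : a ≤ G x₀ (x N) (x N) * G (x N) p p := hG.rect x₀ p p (x N)
    have h5 : G x₀ (x N) (x N) ≤ γ := ball N
    have hb1 : 1 ≤ G x₀ (x N) (x N) := one_le _ _ _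
    have hb2 : 1 ≤ G (x N) p p := one_le _ _ _
    have hmul : G x₀ (x N) (x N) * G (x N) p p ≤ γ * ε ^ 2 :=
      mul_le_mul h5 h3.le (by linarith) hγ.le
    have h6 : γ * ε ^ 2 = (a + γ) / 2 := by
      rw [hεsq]; field_simp
    linarith
  -- convergence facts towards the fixed point property
  have fixbound : ∀ ε : ℝ, 1 < ε → G p (F p) (F p) < ε ^ 3 := by
    intro ε hε
    obtain ⟨N, hN⟩ := hp ε hε
    have h1 : G p (x (N+1)) (x (N+1)) = G (x (N+1)) (x (N+1)) p :=
      hG.perm p (x (N+1)) (x (N+1))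
    have h1' : G p (x (N+1)) (x (N+1)) < ε := by
      rw [h1]; exact hN (N+1) (by omega) (N+1) (by omega)
    have h2 : G (x (N+1)) (F p) (F p) ≤ (G (x N) p p) ^ η := by
      rw [hxs N]
      exact hcontr (x N) (ball N) p pball p pball
    have h3 : G (x N) (x N) p < ε := hN N le_rfl N le_rfl
    have h4 : G (x N) p p < ε ^ 2 := by
      have hs := symm2 (x N) p
      have := hG.pos (x N) (x N) p
      nlinarith
    have h5 : (G (x N) p p) ^ η ≤ ε ^ 2 := by
      have hεsq : (1:ℝ) ≤ ε ^ 2 := by nlinarith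
      calc (G (x N) p p) ^ η ≤ (ε ^ 2) ^ η :=
            Real.rpow_le_rpow (hG.pos _ _ _).le h4.le hη0
      _ ≤ (ε ^ 2) ^ (1:ℝ) :=
            Real.rpow_le_rpow_of_exponent_le hεsq hη1.le
      _ = ε ^ 2 := Real.rpow_one _
    have h6 : G p (F p) (F p) ≤
        G p (x (N+1)) (x (N+1)) * G (x (N+1)) (F p) (F p) := hG.rect p (F p) (F p) (x (N+1))
    have hpos1 := hG.pos p (x (N+1)) (x (N+1))
    have hpos2 := hG.pos (x (N+1)) (F p) (F p)
    have hb : 1 ≤ G (x (N+1)) (F p) (F p) := one_le _ _ _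
    nlinarith [h2.trans h5]
  have fix1 : G p (F p) (F p) = 1 := by
    have hA1 : 1 ≤ G p (F p) (F p) := one_le _ _ _
    rcases eq_or_lt_of_le hA1 with h | h
    · exact h.symm
    · exfalso
      set A := G p (F p) (F p) with hA
      have hε : 1 < A ^ ((3:ℝ)⁻¹) := by
        rw [Real.one_lt_rpow_iff_of_pos (by linarith)]
        left; exact ⟨h, by norm_num⟩
      have hlt := fixbound (A ^ ((3:ℝ)⁻¹)) hε
      have heq : (A ^ ((3:ℝ)⁻¹)) ^ 3 = A := by
        rw [← Real.rpow_natCast (A ^ ((3:ℝ)⁻¹)) 3, ← Real.rpow_mul (by linarith : (0:ℝ) ≤ A)]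
        norm_num
      rw [heq] at hlt
      exact lt_irrefl _ hlt
  have hfix : F p = p := by
    by_contra hne
    have h1 : 1 < G (F p) (F p) p := hG.one_lt (F p) p hne
    have h2 : G (F p) (F p) p = G p (F p) (F p) := by
      rw [hG.perm (F p) (F p) p, hG.perm (F p) p (F p)]
    rw [h2, fix1] at h1
    exact lt_irrefl _ h1
  refine ⟨p, pball, hfix, hG.eq_one p p p rfl rfl, ?_⟩
  intro _ y hy hFy
  by_contra hne
  set a := G y p p with ha
  have h1 : 1 < G p p y := hG.one_lt p y (fun h => hne h.symm)
  have h2 : G p p y = G y p p := by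
    rw [hG.perm p p y, hG.perm p y p]
  rw [h2] at h1
  have h3 : a ≤ a ^ η := by
    have := hcontr y hy p pball p pball
    rw [hFy, hfix] at this
    exact this
  have h4 : a ^ η < a ^ (1:ℝ) := Real.rpow_lt_rpow_of_exponent_lt h1 hη1
  rw [Real.rpow_one] at h4
  linarith
end

section
/- (Corollary 3.4.) Let L be a nonempty set with a partial order ≼ and a multiplicative metric d such that (L, d) is complete. Let F : L → L, x₀ ∈ L, η ∈ [0,1), γ > 0, and let m be a positive integer. Assume: (i) F x ≼ x for every x ∈ L; (ii) d(Fx, Fy)^{1/m} ≤ (d(x,y)^{1/m})^η for all x, y in the closed ball B̄(x₀, γ); (iii) d(x₀, Fx₀) ≤ γ^{1−η}; (iv) whenever a nonincreasing sequence (x_n) multiplicative-converges to a point s, then s ≼ x_n for every n. Then there exists x* ∈ B̄(x₀, γ) with F x* = x* and d(x*, x*) = 1. Moreover, if every two points of B̄(x₀, γ) have a lower bound belonging to B̄(x₀, γ), then x* is the unique fixed point of F in B̄(x₀, γ). -/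
lemma rpow_pow_tendsto {c η : ℝ} (hc : 0 < c) (hη0 : 0 ≤ η) (hη1 : η < 1) :
    Filter.Tendsto (fun n : ℕ => c ^ (η ^ n)) Filter.atTop (nhds 1) := by
  have h1 : Filter.Tendsto (fun n : ℕ => (η : ℝ) ^ n) Filter.atTop (nhds 0) :=
    tendsto_pow_atTop_nhds_zero_of_lt_one hη0 hη1
  have h2 : ContinuousAt (c ^ ·) (0 : ℝ) := Real.continuousAt_const_rpow hc.ne'
  have := h2.tendsto.comp h1
  simpa [Function.comp_def, Real.rpow_zero] using this

lemma root_pow_le {a b η : ℝ} {m : ℕ} (ha : 0 < a) (hb : 0 < b)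
    (hm : (m : ℝ) ≠ 0)
    (h : a ^ (1 / (m : ℝ)) ≤ (b ^ (1 / (m : ℝ))) ^ η) : a ≤ b ^ η := by
  have h2 := Real.rpow_le_rpow (by positivity) h (Nat.cast_nonneg m)
  have e1 : (a ^ (1 / (m : ℝ))) ^ (m : ℝ) = a := by
    rw [← Real.rpow_mul ha.le, one_div, inv_mul_cancel₀ hm, Real.rpow_one]
  have e2 : ((b ^ (1 / (m : ℝ))) ^ η) ^ (m : ℝ) = b ^ η := by
    rw [← Real.rpow_mul (by positivity), ← Real.rpow_mul hb.le]
    congr 1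
    field_simp
  rwa [e1, e2] at h2

structure IsMultMetric {Z : Type*} (d : Z → Z → ℝ) : Prop where
  one_le : ∀ x y, 1 ≤ d x y
  eq_one_iff : ∀ x y, d x y = 1 ↔ x = y
  symm : ∀ x y, d x y = d y x
  triangle : ∀ x y z, d x y ≤ d x z * d z y

def MConv {Z : Type*} (d : Z → Z → ℝ) (x : ℕ → Z) (p : Z) : Prop :=
  Filter.Tendsto (fun n => d (x n) p) Filter.atTop (nhds 1)

def MCauchy {Z : Type*} (d : Z → Z → ℝ) (x : ℕ → Z) : Prop :=
  ∀ ε : ℝ, 1 < ε → ∃ N : ℕ, ∀ n ≥ N, ∀ m ≥ N, d (x n) (x m) < ε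

def MComplete {Z : Type*} (d : Z → Z → ℝ) : Prop :=
  ∀ x : ℕ → Z, MCauchy d x → ∃ p : Z, MConv d x p

def MBall {Z : Type*} (d : Z → Z → ℝ) (x₀ : Z) (γ : ℝ) : Set Z :=
  {y | d x₀ y ≤ γ}

theorem corollary_3_4 {L : Type*} [Nonempty L] [PartialOrder L]
    (d : L → L → ℝ) (hd : IsMultMetric d) (hcomp : MComplete d)
    (F : L → L) (x₀ : L) (η γ : ℝ) (m : ℕ)
    (hη0 : 0 ≤ η) (hη1 : η < 1) (hγ : 0 < γ) (hm : 0 < m)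
    (hdec : ∀ x : L, F x ≤ x)
    (hcontr : ∀ x ∈ MBall d x₀ γ, ∀ y ∈ MBall d x₀ γ,
      (d (F x) (F y)) ^ (1 / (m : ℝ)) ≤ ((d x y) ^ (1 / (m : ℝ))) ^ η)
    (hstart : d x₀ (F x₀) ≤ γ ^ (1 - η))
    (hmono : ∀ (x : ℕ → L) (s : L), (∀ n, x (n + 1) ≤ x n) → MConv d x s →
      ∀ n, s ≤ x n) :
    ∃ xs ∈ MBall d x₀ γ, F xs = xs ∧ d xs xs = 1 ∧
      ((∀ u ∈ MBall d x₀ γ, ∀ v ∈ MBall d x₀ γ,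
          ∃ t ∈ MBall d x₀ γ, t ≤ u ∧ t ≤ v) →
        ∀ y ∈ MBall d x₀ γ, F y = y → y = xs) := by
  have hd1 := hd.one_le
  have hpos : ∀ x y : L, 0 < d x y := fun x y => lt_of_lt_of_le one_pos (hd1 x y)
  have hmne : (m : ℝ) ≠ 0 := Nat.cast_ne_zero.mpr hm.ne'
  have hγ1 : (1 : ℝ) ≤ γ := by
    by_contra h
    push_neg at h
    have h2 : γ ^ (1 - η) < 1 := Real.rpow_lt_one hγ.le h (by linarith)
    linarith [hd1 x₀ (F x₀)]
  -- the real contraction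
  have hc : ∀ x ∈ MBall d x₀ γ, ∀ y ∈ MBall d x₀ γ, d (F x) (F y) ≤ d x y ^ η :=
    fun x hx y hy => root_pow_le (hpos _ _) (hpos _ _) hmne (hcontr x hx y hy)
  have hx0b : x₀ ∈ MBall d x₀ γ := by
    have : d x₀ x₀ = 1 := (hd.eq_one_iff x₀ x₀).mpr rfl
    simp only [MBall, Set.mem_setOf_eq, this]; exact hγ1
  -- ball is invariant
  have hball : ∀ z ∈ MBall d x₀ γ, F z ∈ MBall d x₀ γ := by
    intro z hz
    have h1 : d x₀ (F z) ≤ d x₀ (F x₀) * d (F x₀) (F z) := hd.triangle _ _ _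
    have h2 : d (F x₀) (F z) ≤ d x₀ z ^ η := hc x₀ hx0b z hz
    have h3 : d x₀ z ^ η ≤ γ ^ η := Real.rpow_le_rpow (hpos _ _).le hz hη0
    calc d x₀ (F z) ≤ γ ^ (1 - η) * (γ ^ η) := by
          refine h1.trans (mul_le_mul hstart (h2.trans h3) (hpos _ _).le (by positivity))
      _ = γ := by rw [← Real.rpow_add hγ]; norm_num
  set x : ℕ → L := fun n => F^[n] x₀ with hxdef
  have hxsucc : ∀ n, x (n + 1) = F (x n) := fun n => Function.iterate_succ_apply' F n x₀
  have hxball : ∀ n, x n ∈ MBall d x₀ γ := by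
    intro n
    induction n with
    | zero => exact hx0b
    | succ n ih => rw [hxsucc]; exact hball _ ih
  have hxdec : ∀ n, x (n + 1) ≤ x n := fun n => by rw [hxsucc]; exact hdec _
  -- step bound
  have hstep : ∀ n, d (x n) (x (n + 1)) ≤ γ ^ ((1 - η) * η ^ n) := by
    intro n
    induction n with
    | zero => simpa [hxdef] using hstart
    | succ n ih =>
      have h1 : d (x (n + 1)) (x (n + 2)) ≤ d (x n) (x (n + 1)) ^ η := by
        rw [hxsucc n, hxsucc (n + 1), hxsucc n]
        exact hc _ (hxball n) _ (by rw [← hxsucc n]; exact hxball (n + 1))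
      have h2 : d (x n) (x (n + 1)) ^ η ≤ (γ ^ ((1 - η) * η ^ n)) ^ η :=
        Real.rpow_le_rpow (hpos _ _).le ih hη0
      have h3 : (γ ^ ((1 - η) * η ^ n)) ^ η = γ ^ ((1 - η) * η ^ (n + 1)) := by
        rw [← Real.rpow_mul hγ.le]; ring_nf
      exact h1.trans (h2.trans_eq h3)
  -- chain bound
  have hchain : ∀ n k, d (x n) (x (n + k)) ≤ γ ^ (η ^ n * (1 - η ^ k)) := by
    intro n k
    induction k with
    | zero =>
      have : d (x n) (x n) = 1 := (hd.eq_one_iff _ _).mpr rfl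
      simp [this]
    | succ k ih =>
      have h1 : d (x n) (x (n + (k + 1))) ≤ d (x n) (x (n + k)) * d (x (n + k)) (x (n + k + 1)) := by
        exact hd.triangle (x n) (x (n + (k + 1))) (x (n + k))
      have h2 := hstep (n + k)
      calc d (x n) (x (n + (k + 1)))
          ≤ γ ^ (η ^ n * (1 - η ^ k)) * γ ^ ((1 - η) * η ^ (n + k)) :=
            h1.trans (mul_le_mul ih h2 (hpos _ _).le (by positivity))
        _ = γ ^ (η ^ n * (1 - η ^ (k + 1))) := by
            rw [← Real.rpow_add hγ]; congr 1; rw [pow_add]; ring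
  have hfar : ∀ n k, d (x n) (x (n + k)) ≤ γ ^ (η ^ n) := by
    intro n k
    refine (hchain n k).trans (Real.rpow_le_rpow_of_exponent_le hγ1 ?_)
    have h1 : (0:ℝ) ≤ η ^ n := pow_nonneg hη0 n
    have h2 : (0:ℝ) ≤ η ^ k := pow_nonneg hη0 k
    nlinarith
  -- Cauchy
  have hcauchy : MCauchy d x := by
    intro ε hε
    have ht := rpow_pow_tendsto hγ hη0 hη1
    have : ∀ᶠ n in Filter.atTop, γ ^ ((η:ℝ) ^ n) < ε :=
      ht.eventually (Filter.Tendsto.eventually_lt_const hε Filter.tendsto_id) |>.mono (fun n h => h)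
    obtain ⟨N, hN⟩ := this.exists_forall_of_atTop
    refine ⟨N, fun n hn k hk => ?_⟩
    rcases le_total n k with h | h
    · obtain ⟨j, rfl⟩ := Nat.exists_eq_add_of_le h
      exact lt_of_le_of_lt (hfar n j) (hN n hn)
    · obtain ⟨j, rfl⟩ := Nat.exists_eq_add_of_le h
      rw [hd.symm]
      exact lt_of_le_of_lt (hfar k j) (hN k hk)
  obtain ⟨p, hp⟩ := hcomp x hcauchy
  have hplim : Filter.Tendsto (fun n => d (x n) p) Filter.atTop (nhds 1) := hp
  -- p ∈ ball
  have hpball : p ∈ MBall d x₀ γ := by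
    have hlim : Filter.Tendsto (fun n => γ * d (x n) p) Filter.atTop (nhds γ) := by
      simpa using (tendsto_const_nhds.mul hplim)
    refine ge_of_tendsto hlim (Filter.Eventually.of_forall fun n => ?_)
    calc d x₀ p ≤ d x₀ (x n) * d (x n) p := hd.triangle _ _ _
      _ ≤ γ * d (x n) p := by
          exact mul_le_mul_of_nonneg_right (hxball n) (hpos _ _).le
  -- F p = p
  have hrpow1 : ContinuousAt (fun t : ℝ => t ^ η) 1 :=
    Real.continuousAt_rpow_const 1 η (Or.inl one_ne_zero)
  have hfix : F p = p := by
    have hlim2 : Filter.Tendsto (fun n => d (x (n + 1)) p * d (x n) p ^ η)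
        Filter.atTop (nhds 1) := by
      have ha : Filter.Tendsto (fun n => d (x (n + 1)) p) Filter.atTop (nhds 1) :=
        hplim.comp (Filter.tendsto_add_atTop_nat 1)
      have hb : Filter.Tendsto (fun n => d (x n) p ^ η) Filter.atTop (nhds 1) := by
        have := hrpow1.tendsto.comp hplim
        simpa [Function.comp_def, Real.one_rpow] using this
      simpa using ha.mul hb
    have hle : d p (F p) ≤ 1 := by
      refine ge_of_tendsto hlim2 (Filter.Eventually.of_forall fun n => ?_)
      calc d p (F p) ≤ d p (x (n + 1)) * d (x (n + 1)) (F p) := hd.triangle _ _ _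
        _ = d (x (n + 1)) p * d (F (x n)) (F p) := by rw [hd.symm, hxsucc]
        _ ≤ d (x (n + 1)) p * d (x n) p ^ η := by
            exact mul_le_mul_of_nonneg_left (hc _ (hxball n) _ hpball) (hpos _ _).le
    have : d p (F p) = 1 := le_antisymm hle (hd1 _ _)
    exact ((hd.eq_one_iff p (F p)).mp this).symm
  -- iterates contraction
  have hiterball : ∀ z ∈ MBall d x₀ γ, ∀ n, F^[n] z ∈ MBall d x₀ γ := by
    intro z hz n
    induction n with
    | zero => exact hz
    | succ n ih => rw [Function.iterate_succ_apply']; exact hball _ ih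
  have hiter : ∀ a ∈ MBall d x₀ γ, ∀ b ∈ MBall d x₀ γ, ∀ n,
      d (F^[n] a) (F^[n] b) ≤ d a b ^ (η ^ n) := by
    intro a ha b hb n
    induction n with
    | zero => simp
    | succ n ih =>
      rw [Function.iterate_succ_apply', Function.iterate_succ_apply']
      calc d (F (F^[n] a)) (F (F^[n] b)) ≤ d (F^[n] a) (F^[n] b) ^ η :=
            hc _ (hiterball a ha n) _ (hiterball b hb n)
        _ ≤ (d a b ^ (η ^ n)) ^ η := Real.rpow_le_rpow (hpos _ _).le ih hη0
        _ = d a b ^ (η ^ (n + 1)) := by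
            rw [← Real.rpow_mul (hpos _ _).le]; ring_nf
  refine ⟨p, hpball, hfix, (hd.eq_one_iff p p).mpr rfl, ?_⟩
  intro hlb y hyb hyfix
  obtain ⟨t, htb, -, -⟩ := hlb y hyb p hpball
  have hity : ∀ n, F^[n] y = y := by
    intro n; induction n with
    | zero => rfl
    | succ n ih => rw [Function.iterate_succ_apply', ih, hyfix]
  have hitp : ∀ n, F^[n] p = p := by
    intro n; induction n with
    | zero => rfl
    | succ n ih => rw [Function.iterate_succ_apply', ih, hfix]
  have hty : Filter.Tendsto (fun n => d (F^[n] t) y) Filter.atTop (nhds 1) := by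
    have hub : ∀ n, d (F^[n] t) y ≤ d t y ^ (η ^ n) := by
      intro n
      have := hiter t htb y hyb n
      rwa [hity n] at this
    have hlim := rpow_pow_tendsto (hpos t y) hη0 hη1
    refine tendsto_of_tendsto_of_tendsto_of_le_of_le tendsto_const_nhds hlim
      (fun n => hd1 _ _) hub
  have htp : Filter.Tendsto (fun n => d (F^[n] t) p) Filter.atTop (nhds 1) := by
    have hub : ∀ n, d (F^[n] t) p ≤ d t p ^ (η ^ n) := by
      intro n
      have := hiter t htb p hpball n
      rwa [hitp n] at this
    have hlim := rpow_pow_tendsto (hpos t p) hη0 hη1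
    refine tendsto_of_tendsto_of_tendsto_of_le_of_le tendsto_const_nhds hlim
      (fun n => hd1 _ _) hub
  have : d y p ≤ 1 := by
    have hlim : Filter.Tendsto (fun n => d y (F^[n] t) * d (F^[n] t) p)
        Filter.atTop (nhds 1) := by
      have h1 : Filter.Tendsto (fun n => d y (F^[n] t)) Filter.atTop (nhds 1) := by
        simpa [hd.symm] using hty
      simpa using h1.mul htp
    exact ge_of_tendsto hlim (Filter.Eventually.of_forall fun n => hd.triangle _ _ _)
  exact (hd.eq_one_iff y p).mp (le_antisymm this (hd1 _ _))
end

section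
/- (Corollary 3.5.) Let L be a nonempty set with a partial order ≼ and a multiplicative metric d such that (L, d) is complete. Let F : L → L, x₀ ∈ L, η ∈ [0,1) and γ > 0. Assume: (i) F x ≼ x for every x ∈ L; (ii) d(Fx, Fy) ≤ d(x,y)^η for all x, y in the closed ball B̄(x₀, γ); (iii) d(x₀, Fx₀) ≤ γ^{1−η}; (iv) whenever a nonincreasing sequence (x_n) multiplicative-converges to a point s, then s ≼ x_n for every n. Then there exists x* ∈ B̄(x₀, γ) with F x* = x* and d(x*, x*) = 1. Moreover, if every two points of B̄(x₀, γ) have a lower bound belonging to B̄(x₀, γ), then x* is the unique fixed point of F in B̄(x₀, γ). -/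
theorem corollary_3_5 {L : Type*} [Nonempty L] [PartialOrder L]
    (d : L → L → ℝ) (hd : IsMultMetric d) (hcomp : MComplete d)
    (F : L → L) (x₀ : L) (η γ : ℝ)
    (hη0 : 0 ≤ η) (hη1 : η < 1) (hγ : 0 < γ)
    (hdec : ∀ x : L, F x ≤ x)
    (hcontr : ∀ x ∈ MBall d x₀ γ, ∀ y ∈ MBall d x₀ γ,
      d (F x) (F y) ≤ (d x y) ^ η)
    (hstart : d x₀ (F x₀) ≤ γ ^ (1 - η))
    (hmono : ∀ (x : ℕ → L) (s : L), (∀ n, x (n + 1) ≤ x n) → MConv d x s →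
      ∀ n, s ≤ x n) :
    ∃ xs ∈ MBall d x₀ γ, F xs = xs ∧ d xs xs = 1 ∧
      ((∀ u ∈ MBall d x₀ γ, ∀ v ∈ MBall d x₀ γ,
          ∃ t ∈ MBall d x₀ γ, t ≤ u ∧ t ≤ v) →
        ∀ y ∈ MBall d x₀ γ, F y = y → y = xs) := by
  have hγ1 : (1:ℝ) ≤ γ := by
    by_contra h
    push_neg at h
    have h2 : γ ^ (1 - η) < 1 := Real.rpow_lt_one hγ.le h (by linarith)
    have h3 := hd.one_le x₀ (F x₀)
    linarith
  set x : ℕ → L := fun n => F^[n] x₀ with hxdef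
  have hx0 : x 0 = x₀ := rfl
  have hxs : ∀ n, x (n+1) = F (x n) := fun n => Function.iterate_succ_apply' F n x₀
  have hηn : ∀ n : ℕ, (0:ℝ) ≤ η ^ n := fun n => pow_nonneg hη0 n
  have hηn1 : ∀ n : ℕ, η ^ n ≤ 1 := fun n => pow_le_one₀ hη0 hη1.le
  have hdpos : ∀ a b : L, (0:ℝ) ≤ d a b := fun a b => zero_le_one.trans (hd.one_le a b)
  have hballof : ∀ m : ℕ, d x₀ (x m) ≤ γ ^ (1 - η ^ m) → x m ∈ MBall d x₀ γ := by
    intro m h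
    have h1 : γ ^ (1 - η ^ m) ≤ γ ^ (1:ℝ) :=
      Real.rpow_le_rpow_of_exponent_le hγ1 (by nlinarith [hηn m])
    simpa [MBall] using h.trans (by simpa [Real.rpow_one] using h1)
  have key : ∀ n, d x₀ (x n) ≤ γ ^ (1 - η ^ n) ∧ d (x n) (x (n+1)) ≤ γ ^ ((1-η) * η ^ n) := by
    intro n
    induction n with
    | zero =>
      constructor
      · simp [hx0, (hd.eq_one_iff x₀ x₀).2 rfl]
      · simpa [hx0, hxs 0] using hstart
    | succ n ih =>
      obtain ⟨hA, hB⟩ := ih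
      have hA' : d x₀ (x (n+1)) ≤ γ ^ (1 - η ^ (n+1)) := by
        calc d x₀ (x (n+1)) ≤ d x₀ (x n) * d (x n) (x (n+1)) := hd.triangle _ _ _
        _ ≤ γ ^ (1 - η^n) * γ ^ ((1-η)*η^n) :=
            mul_le_mul hA hB (hdpos _ _) (Real.rpow_nonneg hγ.le _)
        _ = γ ^ (1 - η^(n+1)) := by
            rw [← Real.rpow_add hγ]
            congr 1
            rw [pow_succ]; ring
      refine ⟨hA', ?_⟩
      have h1 : x n ∈ MBall d x₀ γ := hballof n hA
      have h2 : x (n+1) ∈ MBall d x₀ γ := hballof (n+1) hA'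
      have hstep : d (x (n+1)) (x (n+1+1)) ≤ d (x n) (x (n+1)) ^ η := by
        have h3 := hcontr _ h1 _ h2
        rw [← hxs n, ← hxs (n+1)] at h3
        exact h3
      calc d (x (n+1)) (x (n+1+1)) ≤ d (x n) (x (n+1)) ^ η := hstep
      _ ≤ (γ ^ ((1-η)*η^n)) ^ η := Real.rpow_le_rpow (hdpos _ _) hB hη0
      _ = γ ^ ((1-η) * η ^ (n+1)) := by
          rw [← Real.rpow_mul hγ.le]
          congr 1
          rw [pow_succ]; ring
  have hball : ∀ m, x m ∈ MBall d x₀ γ := fun m => hballof m (key m).1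
  -- chain estimate
  have chain : ∀ n k : ℕ, d (x n) (x (n+k)) ≤ γ ^ (η ^ n * (1 - η ^ k)) := by
    intro n k
    induction k with
    | zero =>
      simp [(hd.eq_one_iff (x n) (x n)).2 rfl]
    | succ k ih =>
      calc d (x n) (x (n+(k+1))) ≤ d (x n) (x (n+k)) * d (x (n+k)) (x (n+k+1)) := by
            have := hd.triangle (x n) (x (n+(k+1))) (x (n+k))
            simpa [show n + (k+1) = n + k + 1 by ring] using this
      _ ≤ γ ^ (η^n * (1 - η^k)) * γ ^ ((1-η) * η ^ (n+k)) :=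
          mul_le_mul ih (key (n+k)).2 (hdpos _ _) (Real.rpow_nonneg hγ.le _)
      _ = γ ^ (η ^ n * (1 - η ^ (k+1))) := by
          rw [← Real.rpow_add hγ]
          congr 1
          rw [pow_add, pow_succ]; ring
  have bound : ∀ n m : ℕ, n ≤ m → d (x n) (x m) ≤ γ ^ (η ^ n : ℝ) := by
    intro n m hnm
    obtain ⟨k, rfl⟩ := Nat.exists_eq_add_of_le hnm
    refine (chain n k).trans (Real.rpow_le_rpow_of_exponent_le hγ1 ?_)
    nlinarith [hηn n, hηn k, hηn1 k]
  -- Cauchy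
  have htend : Filter.Tendsto (fun N : ℕ => γ ^ (η ^ N : ℝ)) Filter.atTop (nhds 1) := by
    have h1 : Filter.Tendsto (fun N : ℕ => (η:ℝ)^N) Filter.atTop (nhds 0) :=
      tendsto_pow_atTop_nhds_zero_of_lt_one hη0 hη1
    have h2 := Filter.Tendsto.rpow (tendsto_const_nhds (x := γ)) h1 (Or.inl hγ.ne')
    simpa using h2
  have hcauchy : MCauchy d x := by
    intro ε hε
    obtain ⟨N, hN⟩ := Filter.eventually_atTop.mp
      (Filter.Tendsto.eventually_lt_const hε htend)
    refine ⟨N, fun n hn m hm => ?_⟩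
    rcases le_total n m with h | h
    · refine lt_of_le_of_lt ((bound n m h).trans
        (Real.rpow_le_rpow_of_exponent_le hγ1 (pow_le_pow_of_le_one hη0 hη1.le hn))) (hN N le_rfl)
    · rw [hd.symm]
      refine lt_of_le_of_lt ((bound m n h).trans
        (Real.rpow_le_rpow_of_exponent_le hγ1 (pow_le_pow_of_le_one hη0 hη1.le hm))) (hN N le_rfl)
  obtain ⟨p, hp⟩ := hcomp x hcauchy
  -- p in ball
  have hpball : p ∈ MBall d x₀ γ := by
    have hle : ∀ n, d x₀ p ≤ γ * d (x n) p := by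
      intro n
      calc d x₀ p ≤ d x₀ (x n) * d (x n) p := hd.triangle _ _ _
      _ ≤ γ * d (x n) p := mul_le_mul_of_nonneg_right (hball n) (hdpos _ _)
    have ht : Filter.Tendsto (fun n => γ * d (x n) p) Filter.atTop (nhds (γ * 1)) :=
      tendsto_const_nhds.mul hp
    have := ge_of_tendsto' ht hle
    simpa [MBall] using this.trans_eq (mul_one γ)
  -- fixed point
  have hfix : F p = p := by
    have hle : ∀ n, d p (F p) ≤ d (x (n+1)) p * d (x n) p ^ η := by
      intro n
      calc d p (F p) ≤ d p (x (n+1)) * d (x (n+1)) (F p) := hd.triangle _ _ _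
      _ = d (x (n+1)) p * d (F (x n)) (F p) := by rw [hd.symm p (x (n+1)), hxs n]
      _ ≤ d (x (n+1)) p * d (x n) p ^ η :=
          mul_le_mul_of_nonneg_left (hcontr _ (hball n) _ hpball) (hdpos _ _)
    have h1 : Filter.Tendsto (fun n => d (x (n+1)) p) Filter.atTop (nhds 1) :=
      hp.comp (Filter.tendsto_add_atTop_nat 1)
    have h2 : Filter.Tendsto (fun n => d (x n) p ^ η) Filter.atTop (nhds ((1:ℝ) ^ η)) :=
      hp.rpow_const (Or.inr hη0)
    have ht : Filter.Tendsto (fun n => d (x (n+1)) p * d (x n) p ^ η)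
        Filter.atTop (nhds (1 * (1:ℝ) ^ η)) := h1.mul h2
    have hle1 : d p (F p) ≤ 1 * (1:ℝ) ^ η := ge_of_tendsto' ht hle
    have : d p (F p) ≤ 1 := by simpa [Real.one_rpow] using hle1
    have heq : d p (F p) = 1 := le_antisymm this (hd.one_le _ _)
    exact ((hd.eq_one_iff p (F p)).1 heq).symm
  refine ⟨p, hpball, hfix, (hd.eq_one_iff p p).2 rfl, ?_⟩
  intro _ y hy hFy
  have h1 : d y p ≤ d y p ^ η := by
    have := hcontr y hy p hpball
    rwa [hFy, hfix] at this
  by_contra hne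
  have hgt : 1 < d y p := lt_of_le_of_ne (hd.one_le y p) fun h =>
    hne ((hd.eq_one_iff y p).1 h.symm)
  have h2 : d y p ^ η < d y p ^ (1:ℝ) := Real.rpow_lt_rpow_of_exponent_lt hgt hη1
  rw [Real.rpow_one] at h2
  linarith
end

section
/- (Theorem 3.6, generalized Δ-implicit contraction.) Let L be a nonempty set with a partial order ≼ and a multiplicative G_M-metric G such that (L, G) is multiplicative G_M-complete. Let F : L → L, x₀ ∈ L, η ∈ [0, 1/2), γ > 0, m a positive integer, and set μ = η/(1−η), so μ ∈ [0,1). Assume: (i) F x ≼ x for every x ∈ L; (ii) for all x, y, z in the closed ball B̄(x₀, γ): G(Fx, Fy, Fz)^{1/m} ≤ M^η, where M = max{ G(x,y,z)^{1/m}, G(x,Fx,Fx)^{1/m}, G(y,Fy,Fy)^{1/m}, G(x,Fy,Fy)^{1/m}, (min{G(z,Fx,Fx), G(x,z,z)})^{1/m} }; (iii) G(x₀, Fx₀, Fx₀) ≤ γ^{1−μ}; (iv) whenever a nonincreasing sequence (x_n) in B̄(x₀, γ) multiplicative G_M-converges to a point v, then v ≼ x_n for every n. Then there exists x* ∈ B̄(x₀,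 γ) with F x* = x* and G(x*, x*, x*) = 1; moreover any two comparable fixed points of F in B̄(x₀, γ) are equal. -/
section Aux

variable {L : Type*}

lemma aux_one_le_aab (G : L → L → L → ℝ) (hG : IsMultGMetric G) (a b : L) : 1 ≤ G a a b := by
  rcases eq_or_ne a b with h | h
  · exact le_of_eq (hG.eq_one a a b rfl h).symm
  · exact (hG.one_lt a b h).le

lemma aux_one_le (G : L → L → L → ℝ) (hG : IsMultGMetric G) (x y z : L) : 1 ≤ G x y z := by
  rcases eq_or_ne y z with h | h
  · subst h
    rcases eq_or_ne x y with h' | h'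
    · subst h'; exact le_of_eq (hG.eq_one x x x rfl rfl).symm
    · rw [hG.perm]; exact aux_one_le_aab G hG y x
  · exact le_trans (aux_one_le_aab G hG x y) (hG.le_of_ne x y z h)

lemma aux_one_lt_abb (G : L → L → L → ℝ) (hG : IsMultGMetric G) (a b : L) (h : a ≠ b) : 1 < G a b b := by
  rw [hG.perm]; exact hG.one_lt b a h.symm

lemma aux_sym2 (G : L → L → L → ℝ) (hG : IsMultGMetric G) (a b : L) : G a b b ≤ G b a a ^ 2 := by
  calc G a b b = G b b a := hG.perm a b b
    _ ≤ G b a a * G a b a := hG.rect b b a a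
    _ = G b a a * G b a a := by rw [hG.perm a b a]
    _ = G b a a ^ 2 := (sq _).symm

lemma aux_symaab (G : L → L → L → ℝ) (hG : IsMultGMetric G) (a b : L) : G a a b ≤ G a b b ^ 2 := by
  calc G a a b ≤ G a b b * G b a b := hG.rect a a b b
    _ = G a b b * G a b b := by rw [hG.perm b a b]
    _ = G a b b ^ 2 := (sq _).symm

end Aux

set_option maxHeartbeats 2000000 in
theorem theorem_3_6 {L : Type*} [Nonempty L] [PartialOrder L]
    (G : L → L → L → ℝ) (hG : IsMultGMetric G) (hcomp : GMComplete G)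
    (F : L → L) (x₀ : L) (η γ μ : ℝ) (m : ℕ)
    (hη0 : 0 ≤ η) (hη1 : η < 1 / 2) (hμ : μ = η / (1 - η)) (hγ : 0 < γ) (hm : 0 < m)
    (hdec : ∀ x : L, F x ≤ x)
    (hcontr : ∀ x ∈ GMBall G x₀ γ, ∀ y ∈ GMBall G x₀ γ, ∀ z ∈ GMBall G x₀ γ,
      (G (F x) (F y) (F z)) ^ (1 / (m : ℝ)) ≤
        (max ((G x y z) ^ (1 / (m : ℝ)))
          (max ((G x (F x) (F x)) ^ (1 / (m : ℝ)))
            (max ((G y (F y) (F y)) ^ (1 / (m : ℝ)))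
              (max ((G x (F y) (F y)) ^ (1 / (m : ℝ)))
                ((min (G z (F x) (F x)) (G x z z)) ^ (1 / (m : ℝ))))))) ^ η)
    (hstart : G x₀ (F x₀) (F x₀) ≤ γ ^ (1 - μ))
    (hmono : ∀ (x : ℕ → L) (v : L), (∀ n, x n ∈ GMBall G x₀ γ) →
      (∀ n, x (n + 1) ≤ x n) → GMConv G x v → ∀ n, v ≤ x n) :
    ∃ xs ∈ GMBall G x₀ γ, F xs = xs ∧ G xs xs xs = 1 ∧
      ∀ u ∈ GMBall G x₀ γ, ∀ v ∈ GMBall G x₀ γ,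
        F u = u → F v = v → (u ≤ v ∨ v ≤ u) → u = v := by
  have one_le := aux_one_le G hG
  have one_le_aab := aux_one_le_aab G hG
  have one_lt_abb := aux_one_lt_abb G hG
  have sym2 := aux_sym2 G hG
  have symaab := aux_symaab G hG
  have hη1' : η < 1 := lt_trans hη1 (by norm_num)
  have h1η : 0 < 1 - η := by linarith
  have hμ0 : 0 ≤ μ := by rw [hμ]; positivity
  have hμ1 : μ < 1 := by rw [hμ, div_lt_one h1η]; linarith
  have h1μ : 0 < 1 - μ := by linarith
  -- plain contraction
  have mcontr : ∀ x ∈ GMBall G x₀ γ, ∀ y ∈ GMBall G x₀ γ, ∀ z ∈ GMBall G x₀ γ,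
      G (F x) (F y) (F z) ≤
        (max (G x y z) (max (G x (F x) (F x)) (max (G y (F y) (F y))
          (max (G x (F y) (F y)) (min (G z (F x) (F x)) (G x z z)))))) ^ η := by
    intro x hx y hy z hz
    set c : ℝ := 1 / (m : ℝ) with hc
    have hm0 : (m : ℝ) ≠ 0 := Nat.cast_ne_zero.mpr hm.ne'
    have hcpos : 0 < c := by rw [hc]; positivity
    set M : ℝ := max (G x y z) (max (G x (F x) (F x)) (max (G y (F y) (F y))
      (max (G x (F y) (F y)) (min (G z (F x) (F x)) (G x z z))))) with hM
    have hM0 : 0 < M := lt_of_lt_of_le (hG.pos x y z) (le_max_left _ _)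
    have hGF0 : 0 < G (F x) (F y) (F z) := hG.pos _ _ _
    have key : (G (F x) (F y) (F z)) ^ c ≤ (M ^ η) ^ c := by
      have h1 := hcontr x hx y hy z hz
      have h5 : (0:ℝ) ≤ min (G z (F x) (F x)) (G x z z) :=
        le_min (hG.pos _ _ _).le (hG.pos _ _ _).le
      have hmax : (max ((G x y z) ^ c)
          (max ((G x (F x) (F x)) ^ c)
            (max ((G y (F y) (F y)) ^ c)
              (max ((G x (F y) (F y)) ^ c)
                ((min (G z (F x) (F x)) (G x z z)) ^ c))))) ≤ M ^ c := by
        refine max_le ?_ (max_le ?_ (max_le ?_ (max_le ?_ ?_)))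
        · exact Real.rpow_le_rpow (hG.pos _ _ _).le (le_max_left _ _) hcpos.le
        · exact Real.rpow_le_rpow (hG.pos _ _ _).le
            (le_trans (le_max_left _ _) (le_max_right _ _)) hcpos.le
        · exact Real.rpow_le_rpow (hG.pos _ _ _).le
            (le_trans (le_trans (le_max_left _ _) (le_max_right _ _)) (le_max_right _ _)) hcpos.le
        · exact Real.rpow_le_rpow (hG.pos _ _ _).le
            (le_trans (le_trans (le_trans (le_max_left _ _) (le_max_right _ _))
              (le_max_right _ _)) (le_max_right _ _)) hcpos.le
        · exact Real.rpow_le_rpow h5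
            (le_trans (le_trans (le_trans (le_max_right _ _) (le_max_right _ _))
              (le_max_right _ _)) (le_max_right _ _)) hcpos.le
      have h2 := Real.rpow_le_rpow
        (le_trans (Real.rpow_nonneg (hG.pos x y z).le c) (le_max_left _ _)) hmax hη0
      calc (G (F x) (F y) (F z)) ^ c ≤ _ := h1
        _ ≤ (M ^ c) ^ η := h2
        _ = M ^ (c * η) := (Real.rpow_mul hM0.le c η).symm
        _ = M ^ (η * c) := by rw [mul_comm]
        _ = (M ^ η) ^ c := Real.rpow_mul hM0.le η c
    have h3 := Real.rpow_le_rpow (Real.rpow_nonneg hGF0.le c) key (Nat.cast_nonneg m)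
    rw [← Real.rpow_mul hGF0.le, ← Real.rpow_mul (Real.rpow_nonneg hM0.le η)] at h3
    have hcm : c * (m : ℝ) = 1 := by rw [hc]; field_simp
    rwa [hcm, Real.rpow_one, Real.rpow_one] at h3
  -- Picard sequence
  set x : ℕ → L := fun n => F^[n] x₀ with hxdef
  have hx0 : x 0 = x₀ := rfl
  have hxs : ∀ n, x (n + 1) = F (x n) := fun n => Function.iterate_succ_apply' F n x₀
  set d : ℕ → ℝ := fun n => G (x n) (x (n + 1)) (x (n + 1)) with hddef
  have hd_one_le : ∀ n, 1 ≤ d n := fun n => one_le _ _ _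
  have hd0pos : 0 < d 0 := hG.pos _ _ _
  have hd0_le : d 0 ≤ γ ^ (1 - μ) := by
    have e1 : x 1 = F x₀ := by rw [hxs 0, hx0]
    show G (x 0) (x 1) (x 1) ≤ _
    rw [hx0, e1]; exact hstart
  have hd0_1 : 1 ≤ d 0 := hd_one_le 0
  set S : ℕ → ℝ := fun n => ∑ k ∈ Finset.range n, μ ^ k with hSdef
  have hS : ∀ n, S n ≤ 1 / (1 - μ) := by
    intro n
    show (∑ k ∈ Finset.range n, μ ^ k) ≤ 1 / (1 - μ)
    rw [le_div_iff₀ h1μ]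
    nlinarith [geom_sum_mul μ n, pow_nonneg hμ0 n]
  have ballof : ∀ k, G x₀ (x k) (x k) ≤ d 0 ^ S k → x k ∈ GMBall G x₀ γ := by
    intro k hb
    have h1 : d 0 ^ S k ≤ d 0 ^ (1 / (1 - μ)) :=
      Real.rpow_le_rpow_of_exponent_le hd0_1 (hS k)
    have h2 : d 0 ^ (1 / (1 - μ)) ≤ (γ ^ (1 - μ)) ^ (1 / (1 - μ)) :=
      Real.rpow_le_rpow hd0pos.le hd0_le (by positivity)
    have h3 : (γ ^ (1 - μ)) ^ (1 / (1 - μ)) = γ := by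
      rw [← Real.rpow_mul hγ.le, mul_one_div_cancel h1μ.ne', Real.rpow_one]
    exact le_trans hb (by rw [← h3]; exact le_trans h1 h2)
  -- main induction
  have key : ∀ n, G x₀ (x n) (x n) ≤ d 0 ^ S n ∧ d n ≤ d 0 ^ (μ ^ n : ℝ) := by
    intro n
    induction n with
    | zero =>
      constructor
      · have hs0 : S 0 = 0 := by simp [hSdef]
        rw [hs0, Real.rpow_zero, hx0, hG.eq_one x₀ x₀ x₀ rfl rfl]
      · rw [pow_zero, Real.rpow_one]
    | succ n ih =>
      obtain ⟨ihb, ihd⟩ := ih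
      have hxn : x n ∈ GMBall G x₀ γ := ballof n ihb
      have hb1 : G x₀ (x (n + 1)) (x (n + 1)) ≤ d 0 ^ S (n + 1) := by
        have h1 : G x₀ (x (n + 1)) (x (n + 1)) ≤ G x₀ (x n) (x n) * d n :=
          hG.rect x₀ (x (n + 1)) (x (n + 1)) (x n)
        have h2 : G x₀ (x n) (x n) * d n ≤ d 0 ^ S n * d 0 ^ (μ ^ n : ℝ) :=
          mul_le_mul ihb ihd (le_trans zero_le_one (hd_one_le n))
            (Real.rpow_nonneg hd0pos.le _)
        have h3 : d 0 ^ S n * d 0 ^ (μ ^ n : ℝ) = d 0 ^ S (n + 1) := by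
          rw [← Real.rpow_add hd0pos]
          congr 1
          show S n + μ ^ n = S (n + 1)
          simp [hSdef, Finset.sum_range_succ]
        exact le_trans h1 (le_trans h2 (le_of_eq h3))
      have hxn1 : x (n + 1) ∈ GMBall G x₀ γ := ballof (n + 1) hb1
      refine ⟨hb1, ?_⟩
      have ha1 : (1:ℝ) ≤ d (n + 1) := hd_one_le (n + 1)
      have hb1' : (1:ℝ) ≤ d n := hd_one_le n
      have hapos : (0:ℝ) < d (n + 1) := by linarith
      have hbpos : (0:ℝ) < d n := by linarith
      have hmc := mcontr (x n) hxn (x (n + 1)) hxn1 (x (n + 1)) hxn1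
      rw [← hxs n, ← hxs (n + 1)] at hmc
      have h4 : d (n + 1) ≤ (d n * d (n + 1)) ^ η := by
        refine le_trans hmc (Real.rpow_le_rpow
          (le_trans (hG.pos _ _ _).le (le_max_left _ _)) ?_ hη0)
        refine max_le ?_ (max_le ?_ (max_le ?_ (max_le ?_ ?_)))
        · exact le_mul_of_one_le_right hbpos.le ha1
        · exact le_mul_of_one_le_right hbpos.le ha1
        · exact le_mul_of_one_le_left hapos.le hb1'
        · exact hG.rect (x n) (x (n + 1 + 1)) (x (n + 1 + 1)) (x (n + 1))
        · refine le_trans (min_le_left _ _) ?_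
          rw [hG.eq_one _ _ _ rfl rfl]
          nlinarith
      have h5 : d (n + 1) ≤ d n ^ η * d (n + 1) ^ η := by
        rwa [Real.mul_rpow hbpos.le hapos.le] at h4
      have h6 : d (n + 1) ^ (1 - η : ℝ) ≤ d n ^ η := by
        rw [Real.rpow_sub hapos, Real.rpow_one,
          div_le_iff₀ (Real.rpow_pos_of_pos hapos η)]
        linarith
      have h7 := Real.rpow_le_rpow (Real.rpow_nonneg hapos.le _) h6
        (le_of_lt (by positivity : (0:ℝ) < 1 / (1 - η)))
      rw [← Real.rpow_mul hapos.le, ← Real.rpow_mul hbpos.le,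
        mul_one_div_cancel h1η.ne', Real.rpow_one] at h7
      rw [mul_one_div, ← hμ] at h7
      calc d (n + 1) ≤ d n ^ μ := h7
        _ ≤ (d 0 ^ (μ ^ n : ℝ)) ^ μ := Real.rpow_le_rpow hbpos.le ihd hμ0
        _ = d 0 ^ (μ ^ (n + 1) : ℝ) := by
          rw [← Real.rpow_mul hd0pos.le, ← pow_succ]
  have hball : ∀ n, x n ∈ GMBall G x₀ γ := fun n => ballof n (key n).1
  have hd : ∀ n, d n ≤ d 0 ^ (μ ^ n : ℝ) := fun n => (key n).2
  -- tail bound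
  have tail : ∀ N k, G (x N) (x (N + k)) (x (N + k)) ≤ d 0 ^ (μ ^ N * S k) := by
    intro N k
    induction k with
    | zero =>
      have hs0 : S 0 = 0 := by simp [hSdef]
      rw [hs0, mul_zero, Real.rpow_zero, Nat.add_zero, hG.eq_one _ _ _ rfl rfl]
    | succ k ih =>
      have h1 : G (x N) (x (N + (k + 1))) (x (N + (k + 1))) ≤
          G (x N) (x (N + k)) (x (N + k)) * d (N + k) :=
        hG.rect (x N) (x (N + (k + 1))) (x (N + (k + 1))) (x (N + k))
      have h2 : G (x N) (x (N + k)) (x (N + k)) * d (N + k) ≤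
          d 0 ^ (μ ^ N * S k) * d 0 ^ (μ ^ (N + k) : ℝ) :=
        mul_le_mul ih (hd (N + k)) (le_trans zero_le_one (hd_one_le (N + k)))
          (Real.rpow_nonneg hd0pos.le _)
      have h3 : d 0 ^ (μ ^ N * S k) * d 0 ^ (μ ^ (N + k) : ℝ) =
          d 0 ^ (μ ^ N * S (k + 1)) := by
        rw [← Real.rpow_add hd0pos]
        congr 1
        show μ ^ N * S k + μ ^ (N + k) = μ ^ N * S (k + 1)
        have e : S (k + 1) = S k + μ ^ k := by simp [hSdef, Finset.sum_range_succ]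
        rw [e, pow_add]
        ring
      exact le_trans h1 (le_trans h2 (le_of_eq h3))
  have tailB : ∀ N n, N ≤ n → G (x N) (x n) (x n) ≤ d 0 ^ (μ ^ N * (1 / (1 - μ))) := by
    intro N n hNn
    obtain ⟨k, rfl⟩ := Nat.exists_eq_add_of_le hNn
    refine le_trans (tail N k) (Real.rpow_le_rpow_of_exponent_le hd0_1 ?_)
    exact mul_le_mul_of_nonneg_left (hS k) (pow_nonneg hμ0 N)
  -- smallness device
  have hsmall : ∀ c : ℝ, ∀ ε : ℝ, 1 < ε → ∃ N, ∀ n ≥ N, d 0 ^ (μ ^ n * c) < ε := by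
    intro c ε hε
    have h0 : Filter.Tendsto (fun n : ℕ => μ ^ n * c) Filter.atTop (nhds 0) := by
      simpa using (tendsto_pow_atTop_nhds_zero_of_lt_one hμ0 hμ1).mul_const c
    have h1 : Filter.Tendsto (fun n : ℕ => d 0 ^ (μ ^ n * c)) Filter.atTop (nhds 1) := by
      have hcont := (Real.continuousAt_const_rpow (a := d 0) (b := 0) hd0pos.ne').tendsto.comp h0
      simpa [Function.comp_def, Real.rpow_zero] using hcont
    have h2 := h1.eventually_lt_const hε
    rwa [Filter.eventually_atTop] at h2
  -- Cauchy
  have hcauchy : GMCauchy G x := by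
    intro ε hε
    obtain ⟨N, hN⟩ := hsmall (6 / (1 - μ)) ε hε
    refine ⟨N, fun n hn m' hm' l hl => ?_⟩
    set B : ℝ := d 0 ^ (μ ^ N * (1 / (1 - μ))) with hB
    have hB1 : (1:ℝ) ≤ B := Real.one_le_rpow hd0_1 (by positivity)
    have step1 : G (x n) (x m') (x l) ≤
        G (x n) (x N) (x N) * G (x N) (x m') (x l) := hG.rect _ _ _ (x N)
    have step2 : G (x n) (x N) (x N) ≤ B ^ 2 :=
      le_trans (sym2 (x n) (x N)) (pow_le_pow_left₀ (hG.pos _ _ _).le (tailB N n hn) 2)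
    have step3 : G (x N) (x m') (x l) ≤ B ^ 2 * B ^ 2 := by
      have e1 : G (x N) (x m') (x l) = G (x m') (x l) (x N) := by rw [hG.perm]
      have e2 : G (x m') (x l) (x N) ≤ G (x m') (x N) (x N) * G (x N) (x l) (x N) :=
        hG.rect _ _ _ (x N)
      have e3 : G (x m') (x N) (x N) ≤ B ^ 2 :=
        le_trans (sym2 (x m') (x N)) (pow_le_pow_left₀ (hG.pos _ _ _).le (tailB N m' hm') 2)
      have e4 : G (x N) (x l) (x N) ≤ B ^ 2 := by
        rw [hG.swap]
        exact le_trans (symaab (x N) (x l))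
          (pow_le_pow_left₀ (hG.pos _ _ _).le (tailB N l hl) 2)
      rw [e1]
      exact le_trans e2 (mul_le_mul e3 e4 (hG.pos _ _ _).le (by positivity))
    have total : G (x n) (x m') (x l) ≤ B ^ 6 := by
      calc G (x n) (x m') (x l) ≤ G (x n) (x N) (x N) * G (x N) (x m') (x l) := step1
        _ ≤ B ^ 2 * (B ^ 2 * B ^ 2) :=
          mul_le_mul step2 step3 (hG.pos _ _ _).le (by positivity)
        _ = B ^ 6 := by ring
    have hB6 : B ^ 6 = d 0 ^ (μ ^ N * (6 / (1 - μ))) := by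
      rw [hB, ← Real.rpow_natCast (d 0 ^ (μ ^ N * (1 / (1 - μ)))) 6,
        ← Real.rpow_mul hd0pos.le]
      congr 1
      push_cast
      ring
    exact lt_of_le_of_lt total (by rw [hB6]; exact hN N le_rfl)
  obtain ⟨p, hpconv⟩ := hcomp x hcauchy
  -- G (x n) p p → 1
  have hxnp : ∀ ε : ℝ, 1 < ε → ∃ N, ∀ n ≥ N, G (x n) p p < ε := by
    intro ε hε
    have hδ : 1 < Real.sqrt ε := by
      have h := Real.sqrt_lt_sqrt (by norm_num) hε
      rwa [Real.sqrt_one] at h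
    obtain ⟨N, hN⟩ := hpconv (Real.sqrt ε) hδ
    refine ⟨N, fun n hn => ?_⟩
    have h1 : G (x n) p p ≤ G p (x n) (x n) ^ 2 := sym2 (x n) p
    rw [hG.perm p (x n) (x n)] at h1
    have h4 : G (x n) (x n) p ^ 2 < Real.sqrt ε ^ 2 :=
      pow_lt_pow_left₀ (hN n hn n hn) (hG.pos _ _ _).le (by norm_num)
    rw [Real.sq_sqrt (le_trans zero_le_one hε.le)] at h4
    exact lt_of_le_of_lt h1 h4
  -- p in ball
  have hpball : p ∈ GMBall G x₀ γ := by
    by_contra hcon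
    rw [GMBall, Set.mem_setOf_eq, not_le] at hcon
    have hXγ : 1 < G x₀ p p / γ := (one_lt_div hγ).mpr hcon
    have hε : 1 < Real.sqrt (G x₀ p p / γ) := by
      have h := Real.sqrt_lt_sqrt (by norm_num) hXγ
      rwa [Real.sqrt_one] at h
    obtain ⟨N, hN⟩ := hxnp (Real.sqrt (G x₀ p p / γ)) hε
    have h1 : G x₀ p p ≤ G x₀ (x N) (x N) * G (x N) p p := hG.rect x₀ p p (x N)
    have h2 : G x₀ (x N) (x N) * G (x N) p p < γ * Real.sqrt (G x₀ p p / γ) :=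
      mul_lt_mul' (hball N) (hN N le_rfl) (hG.pos _ _ _).le hγ
    have h3 : Real.sqrt (G x₀ p p / γ) < G x₀ p p / γ := by
      rw [Real.sqrt_lt' (by linarith)]
      nlinarith
    have h4 : γ * Real.sqrt (G x₀ p p / γ) < γ * (G x₀ p p / γ) :=
      mul_lt_mul_of_pos_left h3 hγ
    rw [mul_div_cancel₀ (G x₀ p p) hγ.ne'] at h4
    linarith
  -- fixed point
  have hFp : F p = p := by
    by_contra hne
    have ha1 : 1 < G p (F p) (F p) := one_lt_abb p (F p) (fun h => hne h.symm)
    set a : ℝ := G p (F p) (F p) with ha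
    have hapos : (0:ℝ) < a := lt_trans one_pos ha1
    have haη : 1 < a ^ (1 - η : ℝ) := by
      rw [Real.one_lt_rpow_iff_of_pos hapos]
      exact Or.inl ⟨ha1, by linarith⟩
    set ε : ℝ := (a ^ (1 - η : ℝ)) ^ ((7 : ℝ)⁻¹) with hε
    have hε1 : 1 < ε := by
      rw [hε, Real.one_lt_rpow_iff_of_pos (by positivity)]
      exact Or.inl ⟨haη, by norm_num⟩
    have hεpos : (0:ℝ) < ε := lt_trans one_pos hε1
    have hε7 : ε ^ (7 : ℕ) = a ^ (1 - η : ℝ) := by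
      rw [hε, ← Real.rpow_natCast ((a ^ (1 - η : ℝ)) ^ ((7:ℝ)⁻¹)) 7,
        ← Real.rpow_mul (by positivity)]
      norm_num
    obtain ⟨N₁, hN₁⟩ := hxnp ε hε1
    obtain ⟨N₂, hN₂⟩ := hsmall 1 ε hε1
    set n := max N₁ N₂ with hn
    have hen : G (x n) p p < ε := hN₁ n (le_max_left _ _)
    have hen1 : G (x (n + 1)) p p < ε :=
      hN₁ (n + 1) (le_trans (le_max_left _ _) (Nat.le_succ n))
    have hdn : d n < ε := by
      have h := hN₂ n (le_max_right _ _)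
      rw [mul_one] at h
      exact lt_of_le_of_lt (hd n) h
    have hchain : a ≤ G p (x (n + 1)) (x (n + 1)) * G (x (n + 1)) (F p) (F p) :=
      hG.rect p (F p) (F p) (x (n + 1))
    have hfac1 : G p (x (n + 1)) (x (n + 1)) ≤ ε ^ 2 := by
      refine le_trans (sym2 p (x (n + 1))) ?_
      exact (pow_le_pow_left₀ (hG.pos _ _ _).le hen1.le 2)
    have hmc := mcontr (x n) (hball n) p hpball p hpball
    rw [← hxs n] at hmc
    have hrect2 : G (x n) (F p) (F p) ≤ G (x n) p p * a :=
      hG.rect (x n) (F p) (F p) p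
    have hεsq : (1:ℝ) ≤ ε ^ 2 := by nlinarith
    have hεa : ε ≤ ε ^ 2 * a := by
      have h := mul_le_mul (by nlinarith : ε ≤ ε ^ 2) ha1.le zero_le_one (by positivity)
      simpa using h
    have hT : G (x (n + 1)) (F p) (F p) ≤ (ε ^ 2 * a) ^ η := by
      refine le_trans hmc (Real.rpow_le_rpow
        (le_trans (hG.pos _ _ _).le (le_max_left _ _)) ?_ hη0)
      refine max_le ?_ (max_le ?_ (max_le ?_ (max_le ?_ ?_)))
      · exact le_trans hen.le hεa
      · exact le_trans hdn.le hεa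
      · exact le_mul_of_one_le_left hapos.le hεsq
      · calc G (x n) (F p) (F p) ≤ G (x n) p p * a := hrect2
          _ ≤ ε * a := mul_le_mul_of_nonneg_right hen.le hapos.le
          _ ≤ ε ^ 2 * a := mul_le_mul_of_nonneg_right (by nlinarith) hapos.le
      · exact le_trans (min_le_right _ _) (le_trans hen.le hεa)
    have hT2 : (ε ^ 2 * a) ^ η ≤ ε ^ 2 * a ^ η := by
      rw [Real.mul_rpow (by positivity) hapos.le]
      refine mul_le_mul_of_nonneg_right ?_ (Real.rpow_nonneg hapos.le η)
      calc ((ε ^ 2 : ℝ)) ^ η ≤ (ε ^ 2 : ℝ) ^ (1 : ℝ) :=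
            Real.rpow_le_rpow_of_exponent_le (by nlinarith) hη1'.le
        _ = ε ^ 2 := Real.rpow_one _
    have h9 : a ≤ ε ^ 4 * a ^ η := by
      calc a ≤ G p (x (n + 1)) (x (n + 1)) * G (x (n + 1)) (F p) (F p) := hchain
        _ ≤ ε ^ 2 * (ε ^ 2 * a ^ η) :=
          mul_le_mul hfac1 (le_trans hT hT2) (hG.pos _ _ _).le (by positivity)
        _ = ε ^ 4 * a ^ η := by ring
    have h10 : a ^ (1 - η : ℝ) ≤ ε ^ 4 := by
      rw [Real.rpow_sub hapos, Real.rpow_one,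
        div_le_iff₀ (Real.rpow_pos_of_pos hapos η)]
      linarith
    have h11 : (ε : ℝ) ^ (4 : ℕ) < ε ^ (7 : ℕ) := pow_lt_pow_right₀ hε1 (by norm_num)
    rw [hε7] at h11
    linarith
  -- conclusion
  refine ⟨p, hpball, hFp, hG.eq_one p p p rfl rfl, ?_⟩
  intro u hu v hv huf hvf _
  by_contra hne
  have hb : 1 < G u u v := hG.one_lt u v hne
  have hmcu := mcontr u hu u hu v hv
  rw [huf, hvf] at hmcu
  have h1 : G u u u ≤ G u u v := by
    rw [hG.eq_one u u u rfl rfl]; exact one_le_aab u v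
  have hmin : min (G v u u) (G u v v) ≤ G u u v :=
    le_trans (min_le_left _ _) (le_of_eq (hG.perm v u u))
  have hmax : max (G u u v) (max (G u u u) (max (G u u u)
      (max (G u u u) (min (G v u u) (G u v v))))) ≤ G u u v :=
    max_le le_rfl (max_le h1 (max_le h1 (max_le h1 hmin)))
  have h2 : G u u v ≤ (G u u v) ^ η :=
    le_trans hmcu (Real.rpow_le_rpow
      (le_trans (hG.pos _ _ _).le (le_max_left _ _)) hmax hη0)
  have h3 : (G u u v) ^ η < (G u u v) ^ (1 : ℝ) :=
    Real.rpow_lt_rpow_of_exponent_lt hb hη1'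
  rw [Real.rpow_one] at h3
  linarith
end

section
/- (Key step in the proof of Theorem 3.1: the Picard iterates remain in the closed ball.) Let Z be a nonempty set, G a multiplicative G_M-metric on Z, F : Z → Z, x₀ ∈ Z, η ∈ [0,1) and γ > 0. Assume G(Fx, Fy, Fz) ≤ G(x,y,z)^η for all x, y, z in the closed ball B̄(x₀, γ), and G(x₀, Fx₀, Fx₀) ≤ γ^{1−η}. Let x_j = F^j x₀ be the Picard iterates. Then for every j ≥ 0 one has x_j ∈ B̄(x₀, γ) and G(x_j, x_{j+1}, x_{j+1}) ≤ G(x₀, x₁, x₁)^{η^j}. -/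
lemma one_le_gmm {Z : Type*} {G : Z → Z → Z → ℝ} (hG : IsMultGMetric G)
    (x y : Z) : 1 ≤ G x y y := by
  by_cases h : x = y
  · exact le_of_eq (hG.eq_one x y y h rfl).symm
  · have h1 := hG.one_lt x y h
    have h2 := hG.rect x x y y
    have h3 : G y x y = G x y y := hG.perm y x y
    rw [h3] at h2
    nlinarith [hG.pos x y y]

theorem picard_iterates_in_ball {Z : Type*} [Nonempty Z]
    (G : Z → Z → Z → ℝ) (hG : IsMultGMetric G)
    (F : Z → Z) (x₀ : Z) (η γ : ℝ)
    (hη0 : 0 ≤ η) (hη1 : η < 1) (hγ : 0 < γ)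
    (hcontr : ∀ x ∈ GMBall G x₀ γ, ∀ y ∈ GMBall G x₀ γ, ∀ z ∈ GMBall G x₀ γ,
      G (F x) (F y) (F z) ≤ (G x y z) ^ η)
    (hstart : G x₀ (F x₀) (F x₀) ≤ γ ^ (1 - η)) :
    ∀ j : ℕ, F^[j] x₀ ∈ GMBall G x₀ γ ∧
      G (F^[j] x₀) (F^[j + 1] x₀) (F^[j + 1] x₀) ≤
        (G x₀ (F x₀) (F x₀)) ^ (η ^ j) := by
  set d := G x₀ (F x₀) (F x₀) with hd
  have hd1 : 1 ≤ d := one_le_gmm hG x₀ (F x₀)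
  have hd0 : 0 < d := hG.pos _ _ _
  have hone : (0:ℝ) < 1 - η := by linarith
  -- d ^ (1/(1-η)) ≤ γ
  have hdγ : d ^ (1 / (1 - η)) ≤ γ := by
    have h1 : d ^ (1 / (1 - η)) ≤ (γ ^ (1 - η)) ^ (1 / (1 - η)) :=
      Real.rpow_le_rpow hd0.le hstart (by positivity)
    have h2 : (γ ^ (1 - η)) ^ (1 / (1 - η)) = γ := by
      rw [← Real.rpow_mul hγ.le, mul_one_div, div_self hone.ne', Real.rpow_one]
    linarith [h1, h2.le, h2.ge]
  have key : ∀ j : ℕ,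
      G x₀ (F^[j] x₀) (F^[j] x₀) ≤ d ^ ((1 - η ^ j) / (1 - η)) ∧
      G (F^[j] x₀) (F^[j + 1] x₀) (F^[j + 1] x₀) ≤ d ^ (η ^ j) := by
    intro j
    induction j with
    | zero =>
      constructor
      · simp only [Function.iterate_zero, id_eq]
        rw [hG.eq_one x₀ x₀ x₀ rfl rfl]
        have : ((1 - η ^ 0) / (1 - η) : ℝ) = 0 := by simp
        rw [this, Real.rpow_zero]
      · simp only [Function.iterate_zero, id_eq, Function.iterate_one, pow_zero,
          Real.rpow_one]
        exact le_refl _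
    | succ n ih =>
      obtain ⟨ih1, ih2⟩ := ih
      -- first clause for n+1
      have hrect := hG.rect x₀ (F^[n+1] x₀) (F^[n+1] x₀) (F^[n] x₀)
      have hnew1 : G x₀ (F^[n+1] x₀) (F^[n+1] x₀) ≤ d ^ ((1 - η ^ (n+1)) / (1 - η)) := by
      -- G(x₀, x_{n+1}, x_{n+1}) ≤ G(x₀, x_n, x_n) * G(x_n, x_{n+1}, x_{n+1})
        have hGn : G (F^[n] x₀) (F^[n+1] x₀) (F^[n+1] x₀) ≤ d ^ (η ^ n) := ih2
        have hmul : G x₀ (F^[n+1] x₀) (F^[n+1] x₀) ≤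
            d ^ ((1 - η ^ n) / (1 - η)) * d ^ (η ^ n) := by
          calc G x₀ (F^[n+1] x₀) (F^[n+1] x₀)
              ≤ G x₀ (F^[n] x₀) (F^[n] x₀) * G (F^[n] x₀) (F^[n+1] x₀) (F^[n+1] x₀) := hrect
            _ ≤ d ^ ((1 - η ^ n) / (1 - η)) * d ^ (η ^ n) := by
                apply mul_le_mul ih1 hGn (hG.pos _ _ _).le (by positivity)
        rw [← Real.rpow_add hd0] at hmul
        have hexp : (1 - η ^ n) / (1 - η) + η ^ n = (1 - η ^ (n+1)) / (1 - η) := by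
          field_simp
          ring
        rwa [hexp] at hmul
      refine ⟨hnew1, ?_⟩
      -- memberships
      have hexp_le : ∀ m : ℕ, (1 - η ^ m) / (1 - η) ≤ 1 / (1 - η) := by
        intro m
        gcongr
        nlinarith [pow_nonneg hη0 m]
      have hmem : ∀ m : ℕ, G x₀ (F^[m] x₀) (F^[m] x₀) ≤ d ^ ((1 - η ^ m) / (1 - η)) →
          F^[m] x₀ ∈ GMBall G x₀ γ := by
        intro m hm
        have := Real.rpow_le_rpow_of_exponent_le hd1 (hexp_le m)
        exact le_trans hm (le_trans this hdγ)
      have hmemn : F^[n] x₀ ∈ GMBall G x₀ γ := hmem n ih1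
      have hmemn1 : F^[n+1] x₀ ∈ GMBall G x₀ γ := hmem (n+1) hnew1
      -- contraction step
      have hc := hcontr (F^[n] x₀) hmemn (F^[n+1] x₀) hmemn1 (F^[n+1] x₀) hmemn1
      have hFn : F (F^[n] x₀) = F^[n+1] x₀ := (Function.iterate_succ_apply' F n x₀).symm
      have hFn1 : F (F^[n+1] x₀) = F^[n+2] x₀ := (Function.iterate_succ_apply' F (n+1) x₀).symm
      rw [hFn, hFn1] at hc
      calc G (F^[n+1] x₀) (F^[n+1+1] x₀) (F^[n+1+1] x₀)
          ≤ (G (F^[n] x₀) (F^[n+1] x₀) (F^[n+1] x₀)) ^ η := hc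
        _ ≤ (d ^ (η ^ n)) ^ η := by
            apply Real.rpow_le_rpow (hG.pos _ _ _).le ih2 hη0
        _ = d ^ (η ^ (n+1)) := by
            rw [← Real.rpow_mul hd0.le, ← pow_succ]
  intro j
  obtain ⟨h1, h2⟩ := key j
  refine ⟨?_, h2⟩
  have hexp_le : (1 - η ^ j) / (1 - η) ≤ 1 / (1 - η) := by
    gcongr
    nlinarith [pow_nonneg hη0 j]
  have := Real.rpow_le_rpow_of_exponent_le hd1 hexp_le
  exact le_trans h1 (le_trans this hdγ)
end

section
/- (Key step in the proof of Theorem 3.1: the Picard sequence is Cauchy.) Let Z be a nonempty set, G a multiplicative G_M-metric on Z, F : Z → Z, x₀ ∈ Z, η ∈ [0,1) and γ > 0. Assume G(Fx, Fy, Fz) ≤ G(x,y,z)^η for all x, y, z in the closed ball B̄(x₀, γ), and G(x₀, Fx₀, Fx₀) ≤ γ^{1−η}. Then the Picard sequence x_j = F^j x₀ is a multiplicative G_M-Cauchy sequence. -/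
theorem picard_sequence_cauchy {Z : Type*} [Nonempty Z]
    (G : Z → Z → Z → ℝ) (hG : IsMultGMetric G)
    (F : Z → Z) (x₀ : Z) (η γ : ℝ)
    (hη0 : 0 ≤ η) (hη1 : η < 1) (hγ : 0 < γ)
    (hcontr : ∀ x ∈ GMBall G x₀ γ, ∀ y ∈ GMBall G x₀ γ, ∀ z ∈ GMBall G x₀ γ,
      G (F x) (F y) (F z) ≤ (G x y z) ^ η)
    (hstart : G x₀ (F x₀) (F x₀) ≤ γ ^ (1 - η)) :
    GMCauchy G (fun j => F^[j] x₀) := by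
  -- basic facts
  have one_le : ∀ a b c : Z, 1 ≤ G a b c := by
    intro a b c
    by_cases hbc : b = c
    · subst hbc
      by_cases hab : a = b
      · exact (hG.eq_one a b b hab rfl).ge
      · have h1 : (1:ℝ) < G b b a := hG.one_lt b a (Ne.symm hab)
        have h2 : G a b b = G b b a := hG.perm a b b
        linarith
    · have h1 : G a a b ≤ G a b c := hG.le_of_ne a b c hbc
      by_cases hab : a = b
      · have := hG.eq_one a a b rfl hab
        linarith
      · have := hG.one_lt a b hab
        linarith
  set x : ℕ → Z := fun j => F^[j] x₀ with hxdef
  have hx0 : x 0 = x₀ := rfl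
  have hxs : ∀ j, x (j + 1) = F (x j) := fun j => Function.iterate_succ_apply' F j x₀
  set d : ℕ → ℝ := fun j => G (x j) (x (j+1)) (x (j+1)) with hddef
  set δ : ℝ := G x₀ (F x₀) (F x₀) with hδdef
  have hδpos : 0 < δ := hG.pos _ _ _
  have hδ1 : 1 ≤ δ := one_le _ _ _
  have hK : 0 < 1 - η := by linarith
  have hγ1 : (1:ℝ) ≤ γ := by
    by_contra h
    push_neg at h
    have : γ ^ (1 - η) < 1 := Real.rpow_lt_one hγ.le h hK
    linarith
  -- generic exponent bound gives membership in the ball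
  have hds : ∀ s : ℝ, s ≤ (1 - η)⁻¹ → δ ^ s ≤ γ := by
    intro s hs
    calc δ ^ s ≤ δ ^ (1 - η)⁻¹ := Real.rpow_le_rpow_of_exponent_le hδ1 hs
      _ ≤ (γ ^ (1 - η)) ^ (1 - η)⁻¹ := by
          exact Real.rpow_le_rpow hδpos.le hstart (by positivity)
      _ = γ := by
          rw [← Real.rpow_mul hγ.le, mul_inv_cancel₀ hK.ne', Real.rpow_one]
  have hsum_le : ∀ j : ℕ, (∑ i ∈ Finset.range j, η ^ i) ≤ (1 - η)⁻¹ := by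
    intro j
    rw [geom_sum_eq (by linarith : η ≠ 1) j]
    rw [div_le_iff_of_neg (by linarith : η - 1 < 0)]
    have hpow : (0:ℝ) ≤ η ^ j := pow_nonneg hη0 j
    have : (1 - η)⁻¹ * (η - 1) = -1 := by field_simp; ring
    rw [this]
    linarith
  -- main induction
  have main : ∀ j : ℕ, (x j ∈ GMBall G x₀ γ) ∧ d j ≤ δ ^ (η ^ j) ∧
      G x₀ (x (j+1)) (x (j+1)) ≤ δ ^ (∑ i ∈ Finset.range (j+1), η ^ i) := by
    intro j
    induction j with
    | zero =>
      refine ⟨?_, ?_, ?_⟩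
      · show G x₀ (x 0) (x 0) ≤ γ
        rw [hx0, hG.eq_one x₀ x₀ x₀ rfl rfl]; exact hγ1
      · show d 0 ≤ δ ^ (η ^ 0 : ℝ)
        have : d 0 = δ := by rw [hddef]; simp only [hx0, hxs 0, hx0]; exact hδdef.symm
        rw [this]; simp [Real.rpow_one]
      · have : G x₀ (x 1) (x 1) = δ := by rw [hxs 0, hx0]
        rw [this]; simp [Real.rpow_one]
    | succ j ih =>
      obtain ⟨hballj, hdj, hG0j⟩ := ih
      have hballj1 : x (j+1) ∈ GMBall G x₀ γ := by
        show G x₀ (x (j+1)) (x (j+1)) ≤ γ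
        exact le_trans hG0j (hds _ (hsum_le _))
      have hdj1 : d (j+1) ≤ δ ^ (η ^ (j+1) : ℝ) := by
        have hc : G (F (x j)) (F (x (j+1))) (F (x (j+1))) ≤ (d j) ^ η :=
          hcontr _ hballj _ hballj1 _ hballj1
        have : d (j+1) = G (F (x j)) (F (x (j+1))) (F (x (j+1))) := by
          rw [hddef]; simp only [hxs]
        rw [this]
        calc G (F (x j)) (F (x (j+1))) (F (x (j+1))) ≤ (d j) ^ η := hc
          _ ≤ (δ ^ (η ^ j : ℝ)) ^ η := Real.rpow_le_rpow (hG.pos _ _ _).le hdj hη0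
          _ = δ ^ (η ^ (j+1) : ℝ) := by
              rw [← Real.rpow_mul hδpos.le, ← pow_succ]
      refine ⟨hballj1, hdj1, ?_⟩
      calc G x₀ (x (j+2)) (x (j+2))
          ≤ G x₀ (x (j+1)) (x (j+1)) * G (x (j+1)) (x (j+2)) (x (j+2)) :=
            hG.rect _ _ _ _
        _ ≤ δ ^ (∑ i ∈ Finset.range (j+1), η ^ i) * δ ^ (η ^ (j+1) : ℝ) := by
            apply mul_le_mul hG0j hdj1 (hG.pos _ _ _).le (Real.rpow_nonneg hδpos.le _)
        _ = δ ^ (∑ i ∈ Finset.range (j+2), η ^ i) := by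
            rw [← Real.rpow_add hδpos, ← Finset.sum_range_succ]
  -- chain bound
  have chain : ∀ n m : ℕ, n ≤ m → G (x n) (x m) (x m) ≤ δ ^ (∑ i ∈ Finset.Ico n m, η ^ i) := by
    intro n m hnm
    induction m, hnm using Nat.le_induction with
    | base =>
      rw [Finset.Ico_self, Finset.sum_empty, Real.rpow_zero,
        hG.eq_one (x n) (x n) (x n) rfl rfl]
    | succ m hnm ih =>
      calc G (x n) (x (m+1)) (x (m+1))
          ≤ G (x n) (x m) (x m) * G (x m) (x (m+1)) (x (m+1)) := hG.rect _ _ _ _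
        _ ≤ δ ^ (∑ i ∈ Finset.Ico n m, η ^ i) * δ ^ (η ^ m : ℝ) := by
            apply mul_le_mul ih (main m).2.1 (hG.pos _ _ _).le (Real.rpow_nonneg hδpos.le _)
        _ = δ ^ (∑ i ∈ Finset.Ico n (m+1), η ^ i) := by
            rw [← Real.rpow_add hδpos, Finset.sum_Ico_succ_top hnm]
  have hIco : ∀ N k : ℕ, (∑ i ∈ Finset.Ico N k, η ^ i) ≤ η ^ N * (1 - η)⁻¹ := by
    intro N k
    rw [Finset.sum_Ico_eq_sum_range]
    have : ∀ i ∈ Finset.range (k - N), η ^ (N + i) = η ^ N * η ^ i := by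
      intro i _; rw [pow_add]
    rw [Finset.sum_congr rfl this, ← Finset.mul_sum]
    exact mul_le_mul_of_nonneg_left (hsum_le _) (pow_nonneg hη0 N)
  have hGNk : ∀ N k : ℕ, N ≤ k → G (x N) (x k) (x k) ≤ δ ^ (η ^ N * (1 - η)⁻¹) := by
    intro N k hNk
    exact le_trans (chain N k hNk) (Real.rpow_le_rpow_of_exponent_le hδ1 (hIco N k))
  -- triangle-type bound: G a b c ≤ G t a a ^2 * G t b b ^2 * G t c c ^2
  have sq : ∀ a t : Z, G a t t ≤ G t a a ^ 2 := by
    intro a t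
    have h1 : G a t t = G t t a := hG.perm a t t
    have h2 : G t t a ≤ G t a a * G a t a := hG.rect t t a a
    have h3 : G a t a = G t a a := by rw [hG.perm a t a, hG.swap t a a]
    calc G a t t = G t t a := h1
      _ ≤ G t a a * G a t a := h2
      _ = G t a a ^ 2 := by rw [h3]; ring
  have tri : ∀ a b c t : Z, G a b c ≤ G t a a ^ 2 * (G t b b ^ 2 * G t c c ^ 2) := by
    intro a b c t
    have h1 : G a b c ≤ G a t t * G t b c := hG.rect a b c t
    have h2 : G t b c = G b c t := hG.perm t b c
    have h3 : G b c t ≤ G b t t * G t c t := hG.rect b c t t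
    have h4 : G t c t = G c t t := hG.perm t c t
    have pos : ∀ u v w : Z, (0:ℝ) ≤ G u v w := fun u v w => (hG.pos u v w).le
    calc G a b c ≤ G a t t * G t b c := h1
      _ = G a t t * G b c t := by rw [h2]
      _ ≤ G a t t * (G b t t * G t c t) :=
          mul_le_mul_of_nonneg_left h3 (pos _ _ _)
      _ = G a t t * (G b t t * G c t t) := by rw [h4]
      _ ≤ G t a a ^ 2 * (G t b b ^ 2 * G t c c ^ 2) := by
          have sa := sq a t
          have sb := sq b t
          have sc := sq c t
          have p2 : ∀ u v w : Z, (0:ℝ) ≤ G u v w ^ 2 := fun u v w => sq_nonneg _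
          apply mul_le_mul sa _ (mul_nonneg (pos _ _ _) (pos _ _ _)) (p2 _ _ _)
          apply mul_le_mul sb sc (pos _ _ _) (p2 _ _ _)
  -- finale
  intro ε hε
  have hε0 : (0:ℝ) < ε := lt_trans one_pos hε
  have hε6 : (1:ℝ) < ε ^ ((6:ℝ)⁻¹) := Real.one_lt_rpow_iff_of_pos hε0 |>.mpr (Or.inl ⟨hε, by norm_num⟩)
  -- choose N with δ ^ (η^N * (1-η)⁻¹) < ε ^ (6⁻¹)
  have hexN : ∃ N : ℕ, δ ^ (η ^ N * (1 - η)⁻¹ : ℝ) < ε ^ ((6:ℝ)⁻¹) := by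
    rcases eq_or_lt_of_le hδ1 with h1 | h1
    · exact ⟨0, by rw [← h1, Real.one_rpow]; exact hε6⟩
    · have hlogb : 0 < Real.logb δ (ε ^ ((6:ℝ)⁻¹)) := Real.logb_pos h1 hε6
      have hKpos : (0:ℝ) < (1 - η)⁻¹ := inv_pos.mpr hK
      have hpos : 0 < Real.logb δ (ε ^ ((6:ℝ)⁻¹)) / (1 - η)⁻¹ := div_pos hlogb hKpos
      obtain ⟨N, hN⟩ := ((tendsto_pow_atTop_nhds_zero_of_lt_one hη0 hη1).eventually
        (gt_mem_nhds hpos)).exists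
      refine ⟨N, ?_⟩
      have hexp : η ^ N * (1 - η)⁻¹ < Real.logb δ (ε ^ ((6:ℝ)⁻¹)) :=
        (lt_div_iff₀ hKpos).mp hN
      calc δ ^ (η ^ N * (1 - η)⁻¹ : ℝ) < δ ^ Real.logb δ (ε ^ ((6:ℝ)⁻¹)) :=
          (Real.rpow_lt_rpow_left_iff h1).mpr hexp
        _ = ε ^ ((6:ℝ)⁻¹) := Real.rpow_logb hδpos h1.ne' (by positivity)
  obtain ⟨N, hN⟩ := hexN
  refine ⟨N, fun n hn m hm l hl => ?_⟩
  have hB0 : (0:ℝ) ≤ δ ^ (η ^ N * (1 - η)⁻¹ : ℝ) := Real.rpow_nonneg hδpos.le _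
  set B : ℝ := δ ^ (η ^ N * (1 - η)⁻¹ : ℝ) with hBdef
  have hGn := hGNk N n hn
  have hGm := hGNk N m hm
  have hGl := hGNk N l hl
  have pos : ∀ u v w : Z, (0:ℝ) ≤ G u v w := fun u v w => (hG.pos u v w).le
  have step1 : G (x n) (x m) (x l) ≤ B ^ 2 * (B ^ 2 * B ^ 2) := by
    refine le_trans (tri (x n) (x m) (x l) (x N)) ?_
    have p1 : G (x N) (x n) (x n) ^ 2 ≤ B ^ 2 := pow_le_pow_left₀ (pos _ _ _) hGn 2
    have p2 : G (x N) (x m) (x m) ^ 2 ≤ B ^ 2 := pow_le_pow_left₀ (pos _ _ _) hGm 2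
    have p3 : G (x N) (x l) (x l) ^ 2 ≤ B ^ 2 := pow_le_pow_left₀ (pos _ _ _) hGl 2
    apply mul_le_mul p1 _ (by positivity) (by positivity)
    exact mul_le_mul p2 p3 (by positivity) (by positivity)
  have step2 : B ^ 2 * (B ^ 2 * B ^ 2) = B ^ 6 := by ring
  have step3 : B ^ 6 < (ε ^ ((6:ℝ)⁻¹)) ^ 6 := pow_lt_pow_left₀ hN hB0 (by norm_num)
  have step4 : (ε ^ ((6:ℝ)⁻¹)) ^ 6 = ε := by
    rw [← Real.rpow_natCast (ε ^ ((6:ℝ)⁻¹)) 6, ← Real.rpow_mul hε0.le]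
    norm_num
  calc G (x n) (x m) (x l) ≤ B ^ 2 * (B ^ 2 * B ^ 2) := step1
    _ = B ^ 6 := step2
    _ < (ε ^ ((6:ℝ)⁻¹)) ^ 6 := step3
    _ = ε := step4
end

section
/- (Key step in the proof of Theorem 3.6: geometric decay of consecutive displacements under the implicit contraction.) Let Z be a nonempty set, G a multiplicative G_M-metric on Z, F : Z → Z, x₀ ∈ Z, η ∈ [0, 1/2), γ > 0, and set μ = η/(1−η). Assume that all Picard iterates x_j = F^j x₀ lie in the closed ball B̄(x₀, γ), and that for all x, y, z ∈ B̄(x₀, γ): G(Fx, Fy, Fz) ≤ M^η, where M = max{ G(x,y,z), G(x,Fx,Fx), G(y,Fy,Fy), G(x,Fy,Fy), min{G(z,Fx,Fx), G(x,z,z)} }. Then for every q ≥ 0 one has G(x_q, x_{q+1}, x_{q+1}) ≤ G(x₀, x₁, x₁)^{μ^q}. -/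
theorem geometric_decay_implicit {Z : Type*} [Nonempty Z]
    (G : Z → Z → Z → ℝ) (hG : IsMultGMetric G)
    (F : Z → Z) (x₀ : Z) (η γ μ : ℝ)
    (hη0 : 0 ≤ η) (hη1 : η < 1 / 2) (hμ : μ = η / (1 - η)) (hγ : 0 < γ)
    (hball : ∀ j : ℕ, F^[j] x₀ ∈ GMBall G x₀ γ)
    (hcontr : ∀ x ∈ GMBall G x₀ γ, ∀ y ∈ GMBall G x₀ γ, ∀ z ∈ GMBall G x₀ γ,
      G (F x) (F y) (F z) ≤
        (max (G x y z)
          (max (G x (F x) (F x))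
            (max (G y (F y) (F y))
              (max (G x (F y) (F y))
                (min (G z (F x) (F x)) (G x z z)))))) ^ η) :
    ∀ q : ℕ, G (F^[q] x₀) (F^[q + 1] x₀) (F^[q + 1] x₀) ≤
      (G x₀ (F x₀) (F x₀)) ^ (μ ^ q) := by
  have h1η : (0:ℝ) < 1 - η := by linarith
  have hμ0 : 0 ≤ μ := by rw [hμ]; positivity
  set d : ℕ → ℝ := fun q => G (F^[q] x₀) (F^[q+1] x₀) (F^[q+1] x₀) with hd
  have hone : ∀ q, 1 ≤ d q := by
    intro q
    by_cases h : F^[q] x₀ = F^[q+1] x₀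
    · exact le_of_eq (hG.eq_one _ _ _ h rfl).symm
    · have := hG.one_lt (F^[q+1] x₀) (F^[q] x₀) (Ne.symm h)
      calc (1:ℝ) ≤ G (F^[q+1] x₀) (F^[q+1] x₀) (F^[q] x₀) := le_of_lt this
        _ = d q := by rw [hG.perm, hG.perm]
  have hdpos : ∀ q, 0 < d q := fun q => hG.pos _ _ _
  -- step: d (q+1) ≤ (d q) ^ μ
  have hstep : ∀ q, d (q+1) ≤ (d q) ^ μ := by
    intro q
    have hit : ∀ j, F (F^[j] x₀) = F^[j+1] x₀ := fun j =>
      (Function.iterate_succ_apply' F j x₀).symm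
    have hc := hcontr (F^[q] x₀) (hball q) (F^[q+1] x₀) (hball (q+1))
      (F^[q+1] x₀) (hball (q+1))
    rw [hit q, hit (q+1)] at hc
    have hMle : (max (G (F^[q] x₀) (F^[q+1] x₀) (F^[q+1] x₀))
          (max (G (F^[q] x₀) (F^[q+1] x₀) (F^[q+1] x₀))
            (max (G (F^[q+1] x₀) (F^[q+2] x₀) (F^[q+2] x₀))
              (max (G (F^[q] x₀) (F^[q+2] x₀) (F^[q+2] x₀))
                (min (G (F^[q+1] x₀) (F^[q+1] x₀) (F^[q+1] x₀))
                  (G (F^[q] x₀) (F^[q+1] x₀) (F^[q+1] x₀)))))))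
        ≤ d q * d (q+1) := by
      have h1 : d q ≤ d q * d (q+1) :=
        le_mul_of_one_le_right (le_of_lt (hdpos q)) (hone (q+1))
      have h2 : d (q+1) ≤ d q * d (q+1) :=
        le_mul_of_one_le_left (le_of_lt (hdpos (q+1))) (hone q)
      have h3 : G (F^[q] x₀) (F^[q+2] x₀) (F^[q+2] x₀) ≤ d q * d (q+1) := by
        have := hG.rect (F^[q] x₀) (F^[q+2] x₀) (F^[q+2] x₀) (F^[q+1] x₀)
        exact this
      have h4 : min (G (F^[q+1] x₀) (F^[q+1] x₀) (F^[q+1] x₀))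
          (G (F^[q] x₀) (F^[q+1] x₀) (F^[q+1] x₀)) ≤ d q * d (q+1) :=
        le_trans (min_le_right _ _) h1
      simp only [max_le_iff]
      exact ⟨h1, h1, h2, h3, h4⟩
    have hc2 : d (q+1) ≤ (d q * d (q+1)) ^ η := by
      calc d (q+1) ≤ _ := hc
        _ ≤ (d q * d (q+1)) ^ η :=
          Real.rpow_le_rpow (le_of_lt (lt_of_lt_of_le (hdpos q) (le_max_left _ _))) hMle hη0
    -- algebra: from b ≤ (a*b)^η derive b ≤ a^μ
    set a := d q
    set b := d (q+1)
    have ha : (0:ℝ) < a := hdpos q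
    have hb : (0:ℝ) < b := hdpos (q+1)
    have hsplit : (a * b) ^ η = a ^ η * b ^ η :=
      Real.mul_rpow (le_of_lt ha) (le_of_lt hb)
    have hb1 : b ^ (1 - η) ≤ a ^ η := by
      rw [Real.rpow_sub hb, Real.rpow_one]
      rw [div_le_iff₀ (Real.rpow_pos_of_pos hb η)]
      rw [hsplit] at hc2; linarith
    have hkey := Real.rpow_le_rpow (Real.rpow_nonneg (le_of_lt hb) _) hb1
      (le_of_lt (one_div_pos.mpr h1η))
    rw [← Real.rpow_mul (le_of_lt hb), ← Real.rpow_mul (le_of_lt ha),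
      mul_one_div, div_self (ne_of_gt h1η), Real.rpow_one, mul_one_div] at hkey
    rwa [hμ]
  -- conclusion by induction
  intro q
  induction q with
  | zero =>
    have : d 0 = G x₀ (F x₀) (F x₀) := by
      simp [hd]
    rw [pow_zero, Real.rpow_one, ← this]
  | succ q ih =>
    have hD0 : (0:ℝ) ≤ G x₀ (F x₀) (F x₀) := le_of_lt (hG.pos _ _ _)
    calc d (q+1) ≤ (d q) ^ μ := hstep q
      _ ≤ ((G x₀ (F x₀) (F x₀)) ^ (μ ^ q)) ^ μ :=
        Real.rpow_le_rpow (le_of_lt (hdpos q)) ih hμ0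
      _ = (G x₀ (F x₀) (F x₀)) ^ (μ ^ (q+1)) := by
        rw [← Real.rpow_mul hD0, pow_succ]
end

section
/- (Example 3.3, Step 2: failure of the contraction off the small interval.) On Z = [0, ∞) ⊆ ℝ define G(x,y,z) = exp(|x − y| + |y − z| + |z − x|), and define F : Z → Z by F x = x/4 if 0 ≤ x < 1/3 and F x = x − 1/3 if x ≥ 1/3. Then for all x, y, z ∈ [1/3, ∞) one has G(Fx, Fy, Fz) = G(x, y, z) ≥ G(x, y, z)^{5/8}, and the inequality G(Fx, Fy, Fz) ≤ G(x, y, z)^{5/8} fails whenever x, y, z ∈ [1/3, ∞) are not all equal. -/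
noncomputable def Gexp : ℝ → ℝ → ℝ → ℝ :=
  fun x y z => Real.exp (|x - y| + |y - z| + |z - x|)

noncomputable def F33 : ℝ → ℝ :=
  fun x => if x < 1 / 3 then x / 4 else x - 1 / 3

lemma F33_eq {x : ℝ} (hx : 1 / 3 ≤ x) : F33 x = x - 1 / 3 := by
  rw [F33, if_neg (not_lt.mpr hx)]

lemma Gexp_rpow (x y z : ℝ) (p : ℝ) :
    (Gexp x y z) ^ p = Real.exp (p * (|x - y| + |y - z| + |z - x|)) := by
  rw [Gexp, ← Real.exp_mul, mul_comm]

lemma sum_nonneg' (x y z : ℝ) : 0 ≤ |x - y| + |y - z| + |z - x| := by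
  positivity

theorem example_3_3_step2 :
    (∀ x y z : ℝ, 1 / 3 ≤ x → 1 / 3 ≤ y → 1 / 3 ≤ z →
      Gexp (F33 x) (F33 y) (F33 z) = Gexp x y z ∧
      (Gexp x y z) ^ ((5 : ℝ) / 8) ≤ Gexp x y z) ∧
    (∀ x y z : ℝ, 1 / 3 ≤ x → 1 / 3 ≤ y → 1 / 3 ≤ z → ¬(x = y ∧ y = z) →
      ¬ Gexp (F33 x) (F33 y) (F33 z) ≤ (Gexp x y z) ^ ((5 : ℝ) / 8)) := by
  have hGF : ∀ x y z : ℝ, 1 / 3 ≤ x → 1 / 3 ≤ y → 1 / 3 ≤ z →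
      Gexp (F33 x) (F33 y) (F33 z) = Gexp x y z := by
    intro x y z hx hy hz
    rw [F33_eq hx, F33_eq hy, F33_eq hz, Gexp, Gexp]
    ring_nf
  constructor
  · intro x y z hx hy hz
    refine ⟨hGF x y z hx hy hz, ?_⟩
    rw [Gexp_rpow, Gexp]
    apply Real.exp_le_exp.mpr
    nlinarith [sum_nonneg' x y z]
  · intro x y z hx hy hz hne
    rw [hGF x y z hx hy hz, Gexp_rpow, Gexp]
    have hpos : 0 < |x - y| + |y - z| + |z - x| := by
      rcases lt_or_eq_of_le (sum_nonneg' x y z) with h | h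
      · exact h
      · exfalso
        apply hne
        have h1 : |x - y| = 0 := by
          have := abs_nonneg (y - z); have := abs_nonneg (z - x)
          nlinarith [abs_nonneg (x - y)]
        have h2 : |y - z| = 0 := by
          have := abs_nonneg (x - y); have := abs_nonneg (z - x)
          nlinarith [abs_nonneg (y - z)]
        constructor <;> [skip; skip] <;>
          [exact sub_eq_zero.mp (abs_eq_zero.mp h1);
           exact sub_eq_zero.mp (abs_eq_zero.mp h2)]
    rw [not_le]
    apply Real.exp_lt_exp.mpr
    nlinarith
end
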